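/- arXiv:1512.06441 — 3 statements merged into one kernel-verified Lean document; each statement's English description precedes it below -/
import Mathlib

section
/- Let t ≥ 0 be an integer, let H be a graph with tree-width at most t, and let λ : V(H) → ℝ satisfy |λ(v)| ≤ 1 for every vertex v. If Σ_{v ∈ V(H)} λ(v) ≥ 3t + 3, then there exists a separation (K, L) of H such that (1/3)·Σ_{v ∈ V(H)} λ(v) ≤ Σ_{v ∈ K \ L} λ(v) ≤ (2/3)·Σ_{v ∈ V(H)} λ(v) and |K ∩ L| ≤ t + 1. -/
open SimpleGraph

/-- A tree decomposition of `G`: a tree `T` with a bag `β a ⊆ V(G)` for each node `a`,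
such that every vertex and every edge of `G` lies in some bag, and for each vertex `v`
the set of nodes whose bag contains `v` induces a connected subtree of `T`. -/
structure IsTreeDecomp {V α : Type} (G : SimpleGraph V) (T : SimpleGraph α)
    (β : α → Set V) : Prop where
  isTree : T.IsTree
  mem_bag : ∀ v : V, ∃ a, v ∈ β a
  edge_bag : ∀ ⦃u v : V⦄, G.Adj u v → ∃ a, u ∈ β a ∧ v ∈ β a
  bag_conn : ∀ v : V, (T.induce {a | v ∈ β a}).Connected

/-- `G` has a tree decomposition of width at most `w` (all bags of size at most `w + 1`). -/
def HasTWDecomp {V : Type} (G : SimpleGraph V) (w : ℕ) : Prop :=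
  ∃ (α : Type) (T : SimpleGraph α) (β : α → Set V),
    IsTreeDecomp G T β ∧ ∀ a, (β a).Finite ∧ (β a).ncard ≤ w + 1

/-- The tree-width of `G`, as an extended natural number. -/
noncomputable def treewidth {V : Type} (G : SimpleGraph V) : ℕ∞ :=
  ⨅ (w : ℕ) (_ : HasTWDecomp G w), (w : ℕ∞)

open scoped Classical

set_option linter.unusedSectionVars false

namespace TWsep

variable {α : Type} {T : SimpleGraph α}

/-- The set of nodes on the `b`-side of the oriented tree edge `(a,b)`:
nodes reachable from `b` by a walk avoiding the edge `s(a,b)`. -/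
def Side (T : SimpleGraph α) (a b : α) : Set α :=
  {d | ∃ p : T.Walk b d, s(a, b) ∉ p.edges}

lemma self_mem_side (a b : α) : b ∈ Side T a b :=
  ⟨Walk.nil, by simp⟩

lemma no_avoid_walk (hT : T.IsTree) {a b : α} (hab : T.Adj a b)
    (p : T.Walk a b) : s(a, b) ∈ p.edges := by
  have hb : T.IsBridge s(a, b) := isAcyclic_iff_forall_adj_isBridge.1 hT.IsAcyclic hab
  rw [isBridge_iff_adj_and_forall_walk_mem_edges] at hb
  exact hb p

lemma side_disjoint (hT : T.IsTree) {a b : α} (hab : T.Adj a b) :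
    Side T a b ∩ Side T b a = ∅ := by
  ext d
  simp only [Set.mem_inter_iff, Set.mem_empty_iff_false, iff_false, not_and]
  rintro ⟨p, hp⟩ ⟨q, hq⟩
  have := no_avoid_walk hT hab.symm (p.append q.reverse)
  rw [Walk.edges_append, List.mem_append, Walk.edges_reverse, List.mem_reverse] at this
  rcases this with h | h
  · exact hp (by rwa [Sym2.eq_swap] at h)
  · exact hq h

lemma side_extend {a b x y : α} (hx : x ∈ Side T a b) (hxy : T.Adj x y)
    (hne : s(x, y) ≠ s(a, b)) : y ∈ Side T a b := by
  obtain ⟨p, hp⟩ := hx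
  refine ⟨p.concat hxy, ?_⟩
  rw [Walk.edges_concat]
  simp only [List.concat_eq_append, List.mem_append, List.mem_singleton]
  rintro (h | h)
  · exact hp h
  · exact hne h.symm

lemma side_step {a b x y : α} (hab : T.Adj a b) (hx : x ∈ Side T a b) (hxy : T.Adj x y) :
    y ∈ Side T a b ∪ Side T b a := by
  by_cases hne : s(x, y) = s(a, b)
  · rw [Sym2.eq_iff] at hne
    rcases hne with ⟨rfl, rfl⟩ | ⟨rfl, rfl⟩
    · exact Or.inl (self_mem_side _ _)
    · exact Or.inr (self_mem_side _ _)
  · exact Or.inl (side_extend hx hxy hne)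

lemma side_union (hT : T.IsTree) {a b : α} (hab : T.Adj a b) (d : α) :
    d ∈ Side T a b ∪ Side T b a := by
  obtain ⟨w⟩ := hT.isConnected b d
  have key : ∀ (x d : α) (w : T.Walk x d), x ∈ Side T a b ∪ Side T b a →
      d ∈ Side T a b ∪ Side T b a := by
    intro x d w
    induction w with
    | nil => exact fun h => h
    | @cons x y d hxy w ih =>
      intro hx
      apply ih
      rcases hx with hx | hx
      · exact side_step hab hx hxy
      · have := side_step hab.symm hx hxy
        rwa [Set.union_comm] at this
  exact key b d w (Or.inl (self_mem_side _ _))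

lemma not_self_mem_side (hT : T.IsTree) {a b : α} (hab : T.Adj a b) : a ∉ Side T a b := by
  intro h
  have h2 : a ∈ Side T b a := self_mem_side _ _
  have := side_disjoint hT hab
  exact absurd (Set.mem_inter h h2) (by simp [this])

lemma side_mono (hT : T.IsTree) {a b c : α} (hab : T.Adj a b) (hbc : T.Adj b c)
    (hca : c ≠ a) : Side T b c ⊆ Side T a b := by
  rintro d ⟨w, hw⟩
  have hpe : s(b, c) ∉ w.bypass.edges := fun h => hw (Walk.edges_bypass_subset w h)
  set p := w.bypass with hp
  have hpath : p.IsPath := Walk.bypass_isPath w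
  have hbsup : b ∉ p.support := by
    intro hb
    have hq : s(b, c) ∉ (p.takeUntil b hb).edges :=
      fun h => hpe (Walk.edges_takeUntil_subset _ _ h)
    have := no_avoid_walk hT hbc ((p.takeUntil b hb).reverse)
    rw [Walk.edges_reverse, List.mem_reverse] at this
    exact hq this
  have hab' : s(a, b) ∉ p.edges := by
    intro h
    exact hbsup (Walk.snd_mem_support_of_mem_edges p h)
  refine ⟨Walk.cons hbc p, ?_⟩
  rw [Walk.edges_cons, List.mem_cons]
  rintro (h | h)
  · rw [Sym2.eq_iff] at h
    rcases h with ⟨h1, h2⟩ | ⟨h1, h2⟩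
    · exact hab.ne h1
    · exact hca h1.symm
  · exact hab' h

lemma walk_head_side (hT : T.IsTree) {a c₀ : α} (hne : c₀ ≠ a) :
    ∃ b, T.Adj a b ∧ c₀ ∈ Side T a b := by
  obtain ⟨w0⟩ := hT.isConnected a c₀
  have hpth : w0.bypass.IsPath := Walk.bypass_isPath w0
  generalize w0.bypass = p at hpth
  cases p with
  | nil => exact absurd rfl hne
  | cons h q =>
    rw [Walk.cons_isPath_iff] at hpth
    exact ⟨_, h, q, fun he => hpth.2 (Walk.fst_mem_support_of_mem_edges q he)⟩

/-- Transfer a walk whose support lies in `A` to the induced subgraph on `A`. -/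
lemma walk_induce {W : Type} {G : SimpleGraph W} {A : Set W} :
    ∀ {c d : W} (w : G.Walk c d) (hw : ∀ x ∈ w.support, x ∈ A),
    ∃ w' : (G.induce A).Walk ⟨c, hw c w.start_mem_support⟩ ⟨d, hw d w.end_mem_support⟩,
      ∀ x ∈ w'.support, (x : W) ∈ w.support := by
  intro c d w
  induction w with
  | nil =>
    intro hw
    refine ⟨Walk.nil, ?_⟩
    intro x hx
    simp only [Walk.support_nil, List.mem_singleton] at hx
    subst hx
    simp
  | @cons c y d h p ih =>
    intro hw
    have hy : ∀ x ∈ p.support, x ∈ A := fun x hx => hw x (by simp [Walk.support_cons, hx])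
    obtain ⟨w', hw'⟩ := ih hy
    have hadj : (G.induce A).Adj ⟨c, hw c (Walk.cons h p).start_mem_support⟩
        ⟨y, hy y p.start_mem_support⟩ := by
      simpa using h
    refine ⟨Walk.cons hadj w', ?_⟩
    intro x hx
    rw [Walk.support_cons, List.mem_cons] at hx
    rcases hx with rfl | hx
    · simp [Walk.support_cons]
    · simp [Walk.support_cons, hw' x hx]

/-- A walk from inside `A` to outside `A` contains a crossing edge. -/
lemma exists_crossing {W : Type} {G : SimpleGraph W} {A : Set W} :
    ∀ {x y : W} (w : G.Walk x y), x ∈ A → y ∉ A →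
    ∃ u v, G.Adj u v ∧ u ∈ A ∧ v ∉ A ∧ u ∈ w.support ∧ v ∈ w.support := by
  intro x y w
  induction w with
  | nil => intro hx hy; exact absurd hx hy
  | @cons x z y h p ih =>
    intro hx hy
    by_cases hz : z ∈ A
    · obtain ⟨u, v, huv, hu, hv, hus, hvs⟩ := ih hz hy
      exact ⟨u, v, huv, hu, hv, by simp [Walk.support_cons, hus],
        by simp [Walk.support_cons, hvs]⟩
    · exact ⟨x, z, h, hx, hz, by simp [Walk.support_cons],
        by simp [Walk.support_cons, p.start_mem_support]⟩

/-- Selection lemma: from a family of reals each at most `2S/3` with total at least `2S/3`,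
one can select a subfamily with sum in `[S/3, 2S/3]`. -/
lemma sel {ι : Type} (s : Finset ι) (f : ι → ℝ) (S : ℝ) (hS : 0 < S)
    (hub : ∀ i ∈ s, f i ≤ 2 * S / 3) (htot : 2 * S / 3 ≤ ∑ i ∈ s, f i) :
    ∃ u ⊆ s, S / 3 ≤ ∑ i ∈ u, f i ∧ ∑ i ∈ u, f i ≤ 2 * S / 3 := by
  by_cases hbig : ∃ i ∈ s, S / 3 ≤ f i
  · obtain ⟨i, hi, hfi⟩ := hbig
    refine ⟨{i}, by simpa using hi, ?_, ?_⟩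
    · simpa using hfi
    · simpa using hub i hi
  · push_neg at hbig
    set 𝒰 := s.powerset.filter (fun u => S / 3 ≤ ∑ i ∈ u, f i) with h𝒰
    have hsne : s ∈ 𝒰 := by
      rw [h𝒰, Finset.mem_filter, Finset.mem_powerset]
      exact ⟨le_refl _, le_trans (by linarith) htot⟩
    obtain ⟨u, hu𝒰, humin⟩ := Finset.exists_min_image 𝒰 Finset.card ⟨s, hsne⟩
    rw [h𝒰, Finset.mem_filter, Finset.mem_powerset] at hu𝒰
    obtain ⟨hus, husum⟩ := hu𝒰
    have hune : u.Nonempty := by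
      rcases Finset.eq_empty_or_nonempty u with rfl | h
      · simp at husum; linarith
      · exact h
    obtain ⟨i, hi⟩ := hune
    have herase : ∑ j ∈ u.erase i, f j < S / 3 := by
      by_contra hge
      push_neg at hge
      have : u.erase i ∈ 𝒰 := by
        rw [h𝒰, Finset.mem_filter, Finset.mem_powerset]
        exact ⟨(Finset.erase_subset _ _).trans hus, hge⟩
      have := humin _ this
      have hcard : (u.erase i).card < u.card := Finset.card_erase_lt_of_mem hi
      omega
    have hsumeq : f i + ∑ j ∈ u.erase i, f j = ∑ j ∈ u, f j := Finset.add_sum_erase _ _ hi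
    refine ⟨u, hus, husum, ?_⟩
    have := hbig i (hus hi)
    linarith

variable {V : Type} [Fintype V] (lam : V → ℝ)

lemma msum_abs_le (hlam : ∀ v, |lam v| ≤ 1) (A : Set V) :
    |∑ᶠ v ∈ A, lam v| ≤ (A.ncard : ℝ) := by
  have hA : A.Finite := A.toFinite
  have hrw : ∑ᶠ v ∈ A, lam v = ∑ v ∈ hA.toFinset, lam v := by
    rw [← finsum_mem_coe_finset, hA.coe_toFinset]
  rw [hrw]
  calc |∑ v ∈ hA.toFinset, lam v| ≤ ∑ v ∈ hA.toFinset, |lam v| :=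
        Finset.abs_sum_le_sum_abs _ _
    _ ≤ ∑ v ∈ hA.toFinset, (1 : ℝ) := Finset.sum_le_sum (fun i _ => hlam i)
    _ = (hA.toFinset.card : ℝ) := by simp
    _ = (A.ncard : ℝ) := by rw [Set.ncard_eq_toFinset_card A hA]

lemma msum_union_disjoint (A B : Set V) (h : Disjoint A B) :
    ∑ᶠ v ∈ A ∪ B, lam v = (∑ᶠ v ∈ A, lam v) + ∑ᶠ v ∈ B, lam v :=
  finsum_mem_union h A.toFinite B.toFinite

lemma msum_univ : ∑ᶠ v ∈ (Set.univ : Set V), lam v = ∑ v, lam v := by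
  rw [finsum_mem_univ, finsum_eq_sum_of_fintype]

lemma msum_compl (B : Set V) :
    ∑ᶠ v ∈ (Set.univ \ B : Set V), lam v = (∑ v, lam v) - ∑ᶠ v ∈ B, lam v := by
  have : (B ∪ (Set.univ \ B) : Set V) = Set.univ := by
    ext x; simp [em]
  have h2 := msum_union_disjoint lam B (Set.univ \ B) Set.disjoint_sdiff_right
  rw [this, msum_univ] at h2
  linarith

section Decomp

variable {V : Type} {H : SimpleGraph V} {β : α → Set V}

/-- vertices of `H` whose bag-node lies on the `b`-side of the edge `(a,b)`. -/
def VSide (T : SimpleGraph α) (β : α → Set V) (a b : α) : Set V :=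
  {v | ∃ c ∈ Side T a b, v ∈ β c}

/-- vertices strictly beyond `a` on the `b`-side. -/
def DSide (T : SimpleGraph α) (β : α → Set V) (a b : α) : Set V :=
  VSide T β a b \ β a

lemma vside_mono {a b a' b' : α} (h : Side T a b ⊆ Side T a' b') :
    VSide T β a b ⊆ VSide T β a' b' := by
  rintro v ⟨c, hc, hv⟩
  exact ⟨c, h hc, hv⟩

lemma vside_inter (hdec : IsTreeDecomp H T β) {a b : α} (hab : T.Adj a b) :
    VSide T β a b ∩ VSide T β b a ⊆ β a ∩ β b := by
  rintro v ⟨⟨c, hc, hvc⟩, ⟨c', hc', hvc'⟩⟩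
  have hT := hdec.isTree
  set Sv : Set α := {x | v ∈ β x} with hSv
  have hconn := hdec.bag_conn v
  obtain ⟨w0⟩ := hconn.preconnected ⟨c', hvc'⟩ ⟨c, hvc⟩
  let w : T.Walk c' c := w0.map (SimpleGraph.Embedding.induce Sv).toHom
  have hwsup : ∀ x ∈ w.support, x ∈ Sv := by
    intro x hx
    change x ∈ (w0.map (SimpleGraph.Embedding.induce Sv).toHom).support at hx
    rw [Walk.support_map] at hx
    obtain ⟨y, hy, rfl⟩ := List.mem_map.1 hx
    exact y.2
  have hcside : c ∉ Side T b a := by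
    intro h
    have := side_disjoint hT hab
    have : c ∈ (∅ : Set α) := this ▸ Set.mem_inter hc h
    exact this
  obtain ⟨u, x, hux, hu, hxn, hus, hxs⟩ := exists_crossing w hc' hcside
  have hx2 : x ∈ Side T a b := (side_union hT hab x).resolve_right hxn
  have hedge : s(u, x) = s(b, a) := by
    by_contra hne
    exact hxn (side_extend hu hux hne)
  rw [Sym2.eq_iff] at hedge
  rcases hedge with ⟨rfl, rfl⟩ | ⟨rfl, rfl⟩
  · exact absurd hx2 (not_self_mem_side hT hab)
  · exact ⟨hwsup _ hus, hwsup _ hxs⟩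

lemma vside_union (hdec : IsTreeDecomp H T β) {a b : α} (hab : T.Adj a b) :
    VSide T β a b ∪ VSide T β b a = Set.univ := by
  ext v
  simp only [Set.mem_union, Set.mem_univ, iff_true]
  obtain ⟨c, hc⟩ := hdec.mem_bag v
  rcases side_union hdec.isTree hab c with h | h
  · exact Or.inl ⟨c, h, hc⟩
  · exact Or.inr ⟨c, h, hc⟩

lemma dside_rest (hdec : IsTreeDecomp H T β) {a b : α} (hab : T.Adj a b) :
    Set.univ \ (DSide T β a b ∪ DSide T β b a) ⊆ β a ∩ β b := by
  rintro v ⟨-, hv⟩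
  rw [Set.mem_union] at hv
  push_neg at hv
  obtain ⟨h1, h2⟩ := hv
  have hmem : v ∈ VSide T β a b ∪ VSide T β b a := by
    rw [vside_union hdec hab]; trivial
  rcases hmem with h | h
  · have hva : v ∈ β a := by
      by_contra hva
      exact h1 ⟨h, hva⟩
    have : v ∈ VSide T β b a := ⟨a, self_mem_side b a, hva⟩
    exact vside_inter hdec hab ⟨h, this⟩
  · have hvb : v ∈ β b := by
      by_contra hvb
      exact h2 ⟨h, hvb⟩
    have : v ∈ VSide T β a b := ⟨b, self_mem_side a b, hvb⟩
    exact vside_inter hdec hab ⟨this, h⟩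

lemma dside_disjoint (hdec : IsTreeDecomp H T β) {a b : α} (hab : T.Adj a b) :
    Disjoint (DSide T β a b) (DSide T β b a) := by
  rw [Set.disjoint_left]
  rintro v ⟨h1, h1'⟩ ⟨h2, h2'⟩
  exact h1' (vside_inter hdec hab ⟨h1, h2⟩).1

lemma dside_class_disjoint (hdec : IsTreeDecomp H T β) {a b b' : α}
    (hb : T.Adj a b) (hb' : T.Adj a b') (hne : b ≠ b') :
    Disjoint (DSide T β a b) (DSide T β a b') := by
  rw [Set.disjoint_left]
  rintro v ⟨h1, h1'⟩ ⟨h2, h2'⟩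
  have : VSide T β a b' ⊆ VSide T β b a :=
    vside_mono (side_mono hdec.isTree hb.symm hb' (Ne.symm hne))
  exact h1' (vside_inter hdec hb ⟨h1, this h2⟩).1


lemma dside_cover (hdec : IsTreeDecomp H T β) (a : α) :
    Set.univ \ β a = ⋃ b ∈ {c | T.Adj a c}, DSide T β a b := by
  ext v
  simp only [Set.mem_diff, Set.mem_univ, true_and, Set.mem_iUnion, Set.mem_setOf_eq]
  constructor
  · intro hva
    obtain ⟨c₀, hc₀⟩ := hdec.mem_bag v
    have hne : c₀ ≠ a := by rintro rfl; exact hva hc₀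
    obtain ⟨b, hab, hside⟩ := walk_head_side hdec.isTree hne
    exact ⟨b, hab, ⟨c₀, hside, hc₀⟩, hva⟩
  · rintro ⟨b, hab, -, hva⟩
    exact hva

section Main

variable [Fintype V] [Fintype α]

lemma exists_good (hdec : IsTreeDecomp H T β) (lam : V → ℝ) (S : ℝ)
    (hflip : ∀ {a b : α}, T.Adj a b → 2 * S / 3 < ∑ᶠ v ∈ DSide T β a b, lam v →
      ∑ᶠ v ∈ DSide T β b a, lam v ≤ 2 * S / 3) :
    ∃ a : α, ∀ c, T.Adj a c → ∑ᶠ v ∈ DSide T β a c, lam v ≤ 2 * S / 3 := by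
  classical
  have hT := hdec.isTree
  set m : Set V → ℝ := fun A => ∑ᶠ v ∈ A, lam v with hm
  by_cases hbad : ∃ p : α × α, T.Adj p.1 p.2 ∧ 2 * S / 3 < m (DSide T β p.1 p.2)
  · set Bad : Set (α × α) := {p | T.Adj p.1 p.2 ∧ 2 * S / 3 < m (DSide T β p.1 p.2)} with hB
    have hne : ((fun p : α × α => (Side T p.1 p.2).ncard) '' Bad).Nonempty :=
      Set.Nonempty.image _ hbad
    obtain ⟨p, hpBad, hpn⟩ := Nat.sInf_mem hne
    simp only at hpn
    refine ⟨p.2, ?_⟩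
    intro c hc
    by_contra hgt
    push_neg at hgt
    by_cases hca : c = p.1
    · subst hca
      exact absurd (hflip hpBad.1 hpBad.2) (not_le.2 hgt)
    · have hsub : Side T p.2 c ⊆ Side T p.1 p.2 := side_mono hT hpBad.1 hc hca
      have hlt : (Side T p.2 c).ncard < (Side T p.1 p.2).ncard := by
        apply Set.ncard_lt_ncard _ (Set.toFinite _)
        exact ⟨hsub, fun h => not_self_mem_side hT hc (h (self_mem_side p.1 p.2))⟩
      have hle : sInf ((fun p : α × α => (Side T p.1 p.2).ncard) '' Bad)
          ≤ (Side T p.2 c).ncard :=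
        Nat.sInf_le ⟨(p.2, c), ⟨hc, hgt⟩, rfl⟩
      omega
  · push_neg at hbad
    have : Nonempty α := hT.isConnected.nonempty
    obtain ⟨a⟩ := this
    exact ⟨a, fun c hc => hbad (a, c) hc⟩

theorem main_aux (t : ℕ) (H : SimpleGraph V)
    (T : SimpleGraph α) (β : α → Set V) (hdec : IsTreeDecomp H T β)
    (hbag : ∀ a, (β a).ncard ≤ t + 1)
    (lam : V → ℝ) (hlam : ∀ v, |lam v| ≤ 1)
    (hsum : 3 * (t : ℝ) + 3 ≤ ∑ v, lam v) :
    ∃ K L : Set V, K ∪ L = Set.univ ∧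
      (∀ u ∈ K \ L, ∀ v ∈ L \ K, ¬ H.Adj u v) ∧
      (1 / 3 : ℝ) * (∑ v, lam v) ≤ ∑ᶠ v ∈ K \ L, lam v ∧
      ∑ᶠ v ∈ K \ L, lam v ≤ (2 / 3 : ℝ) * (∑ v, lam v) ∧
      (K ∩ L).ncard ≤ t + 1 := by
  classical
  have hT := hdec.isTree
  set S : ℝ := ∑ v, lam v with hS
  have hSpos : 0 < S := lt_of_lt_of_le (by positivity) hsum
  have ht1 : (t : ℝ) + 1 ≤ S / 3 := by linarith
  set m : Set V → ℝ := fun A => ∑ᶠ v ∈ A, lam v with hm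
  have hmbag : ∀ a : α, |m (β a)| ≤ (t : ℝ) + 1 := by
    intro a
    refine le_trans (msum_abs_le lam hlam _) ?_
    exact_mod_cast Nat.cast_le.2 (hbag a)
  -- the flip bound
  have hflip : ∀ {a b : α}, T.Adj a b → 2 * S / 3 < m (DSide T β a b) →
      m (DSide T β b a) ≤ 2 * S / 3 := by
    intro a b hab hbig
    set R : Set V := Set.univ \ (DSide T β a b ∪ DSide T β b a) with hR
    have hmR : m R = S - (m (DSide T β a b) + m (DSide T β b a)) := by
      rw [hm]
      simp only
      rw [msum_compl lam _, msum_union_disjoint lam _ _ (dside_disjoint hdec hab)]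
    have hRbound : |m R| ≤ (t : ℝ) + 1 := by
      refine le_trans (msum_abs_le lam hlam _) ?_
      have h1 : R.ncard ≤ (β a).ncard :=
        Set.ncard_le_ncard ((dside_rest hdec hab).trans Set.inter_subset_left)
          (Set.toFinite _)
      have := hbag a
      exact_mod_cast Nat.cast_le.2 (le_trans h1 this)
    have := abs_le.1 hRbound
    linarith
  obtain ⟨a, hgood⟩ := exists_good hdec lam S hflip
  -- neighbors
  set nbset : Set α := {c | T.Adj a c} with hnbset
  set nb : Finset α := nbset.toFinite.toFinset with hnb
  have hnbmem : ∀ {c}, c ∈ nb ↔ T.Adj a c := by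
    intro c
    rw [hnb, Set.Finite.mem_toFinset]
    rfl
  have hbiUnion : ∀ (u : Finset α), (↑u : Set α) ⊆ nbset →
      m (⋃ b ∈ (↑u : Set α), DSide T β a b) = ∑ b ∈ u, m (DSide T β a b) := by
    intro u hu
    rw [hm]
    simp only
    rw [finsum_mem_biUnion]
    · rw [finsum_mem_coe_finset]
    · intro b hb b' hb' hne
      exact dside_class_disjoint hdec (hu hb) (hu hb') hne
    · exact Set.finite_coe_iff.1 inferInstance
    · intro i _
      exact Set.toFinite _
  have hcover : Set.univ \ β a = ⋃ b ∈ (↑nb : Set α), DSide T β a b := by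
    rw [dside_cover hdec a]
    congr 1
    rw [hnb, Set.Finite.coe_toFinset]
  have hsumclasses : ∑ b ∈ nb, m (DSide T β a b) = S - m (β a) := by
    rw [← hbiUnion nb (by rw [hnb, Set.Finite.coe_toFinset]), ← hcover, hm]
    simp only
    rw [msum_compl lam]
  have htot : 2 * S / 3 ≤ ∑ b ∈ nb, m (DSide T β a b) := by
    rw [hsumclasses]
    have := abs_le.1 (hmbag a)
    linarith
  obtain ⟨u, hu, hlow, hhigh⟩ := sel nb (fun b => m (DSide T β a b)) S hSpos
    (fun b hb => hgood b (hnbmem.1 hb)) htot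
  set P : Set V := ⋃ b ∈ (↑u : Set α), DSide T β a b with hP
  set Q : Set V := ⋃ b ∈ (↑(nb \ u) : Set α), DSide T β a b with hQ
  have hPmem : ∀ {v}, v ∈ P → ∃ b, b ∈ u ∧ v ∈ DSide T β a b := by
    intro v hv
    rw [hP] at hv
    simp only [Set.mem_iUnion, Finset.mem_coe] at hv
    obtain ⟨b, hb, hvb⟩ := hv
    exact ⟨b, hb, hvb⟩
  have hQmem : ∀ {v}, v ∈ Q → ∃ b, b ∈ nb ∧ b ∉ u ∧ v ∈ DSide T β a b := by
    intro v hv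
    rw [hQ] at hv
    simp only [Set.mem_iUnion, Finset.mem_coe, Finset.mem_sdiff] at hv
    obtain ⟨b, ⟨hb1, hb2⟩, hvb⟩ := hv
    exact ⟨b, hb1, hb2, hvb⟩
  have hPβ : ∀ {v}, v ∈ P → v ∉ β a := by
    intro v hv
    obtain ⟨b, -, hvb⟩ := hPmem hv
    exact hvb.2
  have hQβ : ∀ {v}, v ∈ Q → v ∉ β a := by
    intro v hv
    obtain ⟨b, -, -, hvb⟩ := hQmem hv
    exact hvb.2
  have hPQ : ∀ {v}, v ∈ P → v ∈ Q → False := by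
    intro v hv hv'
    obtain ⟨b, hb, hvb⟩ := hPmem hv
    obtain ⟨b', hb'1, hb'2, hvb'⟩ := hQmem hv'
    have hne : b ≠ b' := by rintro rfl; exact hb'2 hb
    exact Set.disjoint_left.1
      (dside_class_disjoint hdec (hnbmem.1 (hu hb)) (hnbmem.1 hb'1) hne) hvb hvb'
  set K : Set V := P ∪ β a with hK
  set L : Set V := Q ∪ β a with hL
  have hKLdiff : K \ L = P := by
    ext v
    rw [hK, hL]
    simp only [Set.mem_diff, Set.mem_union]
    constructor
    · rintro ⟨h1 | h1, h2⟩
      · exact h1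
      · exact absurd (Or.inr h1) h2
    · intro hv
      exact ⟨Or.inl hv, by rintro (h | h); exacts [hPQ hv h, hPβ hv h]⟩
  have hLKdiff : L \ K = Q := by
    ext v
    rw [hK, hL]
    simp only [Set.mem_diff, Set.mem_union]
    constructor
    · rintro ⟨h1 | h1, h2⟩
      · exact h1
      · exact absurd (Or.inr h1) h2
    · intro hv
      exact ⟨Or.inl hv, by rintro (h | h); exacts [hPQ h hv, hQβ hv h]⟩
  have hKLint : K ∩ L = β a := by
    ext v
    rw [hK, hL]
    simp only [Set.mem_inter_iff, Set.mem_union]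
    constructor
    · rintro ⟨h1 | h1, h2 | h2⟩ <;> try assumption
      exact absurd h2 (fun h => hPQ h1 h)
    · intro hv
      exact ⟨Or.inr hv, Or.inr hv⟩
  refine ⟨K, L, ?_, ?_, ?_, ?_, ?_⟩
  · -- union univ
    rw [hK, hL]
    have hPQcover : P ∪ Q = Set.univ \ β a := by
      rw [hcover, hP, hQ]
      rw [← Set.biUnion_union]
      congr 1
      rw [← Finset.coe_union, Finset.union_sdiff_of_subset hu]
    ext v
    simp only [Set.mem_union, Set.mem_univ, iff_true]
    by_cases hva : v ∈ β a
    · exact Or.inl (Or.inr hva)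
    · have : v ∈ P ∪ Q := by rw [hPQcover]; exact ⟨trivial, hva⟩
      rcases this with h | h
      · exact Or.inl (Or.inl h)
      · exact Or.inr (Or.inl h)
  · -- no edges
    intro x hx y hy hadj
    rw [hKLdiff] at hx
    rw [hLKdiff] at hy
    obtain ⟨b, hb, hxb⟩ := hPmem hx
    obtain ⟨b', hb'1, hb'2, hyb⟩ := hQmem hy
    have hne : b ≠ b' := by rintro rfl; exact hb'2 hb
    have hab : T.Adj a b := hnbmem.1 (hu hb)
    have hab' : T.Adj a b' := hnbmem.1 hb'1
    obtain ⟨e, hxe, hye⟩ := hdec.edge_bag hadj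
    rcases side_union hT hab e with he | he
    · have hy1 : y ∈ VSide T β a b := ⟨e, he, hye⟩
      have hy2 : VSide T β a b' ⊆ VSide T β b a :=
        vside_mono (side_mono hT hab.symm hab' (Ne.symm hne))
      have : y ∈ β a := (vside_inter hdec hab ⟨hy1, hy2 hyb.1⟩).1
      exact hyb.2 this
    · have hx1 : x ∈ VSide T β b a := ⟨e, he, hxe⟩
      have : x ∈ β a := (vside_inter hdec hab ⟨hxb.1, hx1⟩).1
      exact hxb.2 this
  · -- lower bound
    rw [hKLdiff]
    have : (∑ᶠ v ∈ P, lam v) = ∑ b ∈ u, m (DSide T β a b) := by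
      rw [hP]
      exact hbiUnion u (fun b hb => (hnbmem.1 (hu hb) : T.Adj a b))
    rw [this]
    linarith
  · -- upper bound
    rw [hKLdiff]
    have : (∑ᶠ v ∈ P, lam v) = ∑ b ∈ u, m (DSide T β a b) := by
      rw [hP]
      exact hbiUnion u (fun b hb => (hnbmem.1 (hu hb) : T.Adj a b))
    rw [this]
    linarith
  · rw [hKLint]
    exact hbag a

end Main

end Decomp

theorem reduce {V : Type} [Fintype V] {γ : Type} {H : SimpleGraph V}
    {T : SimpleGraph γ} {β : γ → Set V} (hdec : IsTreeDecomp H T β) :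
    ∃ A : Set γ, A.Finite ∧ IsTreeDecomp H (T.induce A) (fun a => β ↑a) := by
  classical
  have hT := hdec.isTree
  have hTe := hT.existsUnique_path
  set pa : ∀ x y : γ, T.Walk x y := fun x y => (hTe x y).choose with hpa
  have paPath : ∀ x y, (pa x y).IsPath := fun x y => (hTe x y).choose_spec.1
  have paUniq : ∀ {x y} (q : T.Walk x y), q.IsPath → q = pa x y :=
    fun q hq => (hTe _ _).choose_spec.2 q hq
  set f : V → γ := fun v => (hdec.mem_bag v).choose with hfdef
  have hf : ∀ v, v ∈ β (f v) := fun v => (hdec.mem_bag v).choose_spec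
  set g : V × V → γ := fun p =>
    if h : H.Adj p.1 p.2 then (hdec.edge_bag h).choose else f p.1 with hgdef
  have hg : ∀ {u v : V} (h : H.Adj u v), u ∈ β (g (u, v)) ∧ v ∈ β (g (u, v)) := by
    intro u v h
    rw [hgdef]
    simp only [dif_pos h]
    exact (hdec.edge_bag h).choose_spec
  have : Nonempty γ := hT.isConnected.nonempty
  obtain ⟨a₀⟩ := this
  set F : Set γ := Set.range f ∪ Set.range g with hFdef
  have hF : F.Finite := (Set.finite_range f).union (Set.finite_range g)
  set A : Set γ := ⋃ y ∈ insert a₀ F, {d | d ∈ (pa a₀ y).support} with hAdef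
  have hA : A.Finite :=
    Set.Finite.biUnion (hF.insert a₀) (fun y _ => (pa a₀ y).support.finite_toSet)
  have hmemA : ∀ {d}, d ∈ A ↔ ∃ y ∈ insert a₀ F, d ∈ (pa a₀ y).support := by
    intro d
    rw [hAdef]
    simp [Set.mem_iUnion]
  have ha₀ : a₀ ∈ A := hmemA.2 ⟨a₀, Set.mem_insert _ _, Walk.start_mem_support _⟩
  have hFA : ∀ {y}, y ∈ F → y ∈ A :=
    fun hy => hmemA.2 ⟨_, Set.mem_insert_of_mem _ hy, Walk.end_mem_support _⟩
  have hpre : ∀ {x y : γ} (hx : x ∈ (pa a₀ y).support),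
      pa a₀ x = (pa a₀ y).takeUntil x hx := by
    intro x y hx
    exact ((paUniq _ ((paPath a₀ y).takeUntil hx))).symm
  have key1 : ∀ {x}, x ∈ A → ∀ {d}, d ∈ (pa a₀ x).support → d ∈ A := by
    intro x hx d hd
    obtain ⟨y, hy, hxsup⟩ := hmemA.1 hx
    rw [hpre hxsup] at hd
    exact hmemA.2 ⟨y, hy, Walk.support_takeUntil_subset _ _ hd⟩
  have key2 : ∀ {c d : γ}, c ∈ A → d ∈ A → ∀ {x}, x ∈ (pa c d).support → x ∈ A := by
    intro c d hc hd x hx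
    set w : T.Walk c d := (pa a₀ c).reverse.append (pa a₀ d) with hw
    have hbp : pa c d = w.bypass := (paUniq _ (Walk.bypass_isPath w)).symm
    rw [hbp] at hx
    have hx' := Walk.support_bypass_subset w hx
    rw [hw, Walk.mem_support_append_iff] at hx'
    rcases hx' with h | h
    · rw [Walk.support_reverse, List.mem_reverse] at h
      exact key1 hc h
    · exact key1 hd h
  have hSvconv : ∀ (v : V) {c d : γ}, v ∈ β c → v ∈ β d →
      ∀ x ∈ (pa c d).support, v ∈ β x := by
    intro v c d hc hd
    have hconn := hdec.bag_conn v
    obtain ⟨w0⟩ := hconn.preconnected ⟨c, hc⟩ ⟨d, hd⟩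
    set w : T.Walk c d := w0.map (SimpleGraph.Embedding.induce {a | v ∈ β a}).toHom with hwm
    have hwsup : ∀ x ∈ w.support, v ∈ β x := by
      intro x hx
      change x ∈ (w0.map (SimpleGraph.Embedding.induce {a | v ∈ β a}).toHom).support at hx
      rw [Walk.support_map] at hx
      obtain ⟨y, hy, rfl⟩ := List.mem_map.1 hx
      exact y.2
    have hbp : pa c d = w.bypass := (paUniq _ (Walk.bypass_isPath w)).symm
    rw [hbp]
    intro x hx
    exact hwsup x (Walk.support_bypass_subset w hx)
  refine ⟨A, hA, ?_, ?_, ?_, ?_⟩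
  · -- isTree
    have hNE : Nonempty ↥A := ⟨⟨a₀, ha₀⟩⟩
    have hreach : ∀ x : ↥A, (T.induce A).Reachable ⟨a₀, ha₀⟩ x := by
      intro x
      obtain ⟨w', -⟩ := walk_induce (pa a₀ ↑x) (fun d hd => key1 x.2 hd)
      exact ⟨w'.copy rfl (Subtype.ext rfl)⟩
    constructor
    · rw [connected_iff]
      exact ⟨fun x y => (hreach x).symm.trans (hreach y), hNE⟩
    · intro x c hc
      have hinj : Function.Injective
          ((SimpleGraph.Embedding.induce (G := T) A).toHom : ↥A → γ) :=
        Subtype.val_injective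
      exact hT.IsAcyclic _ ((Walk.map_isCycle_iff_of_injective hinj).2 hc)
  · -- mem_bag
    intro v
    exact ⟨⟨f v, hFA (Or.inl ⟨v, rfl⟩)⟩, hf v⟩
  · -- edge_bag
    intro u v h
    exact ⟨⟨g (u, v), hFA (Or.inr ⟨(u, v), rfl⟩)⟩, (hg h).1, (hg h).2⟩
  · -- bag_conn
    intro v
    rw [connected_iff]
    refine ⟨?_, ⟨⟨⟨f v, hFA (Or.inl ⟨v, rfl⟩)⟩, hf v⟩⟩⟩
    have hreach : ∀ x : {a : ↥A | v ∈ β ↑a},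
        ((T.induce A).induce {a : ↥A | v ∈ β ↑a}).Reachable
          ⟨⟨f v, hFA (Or.inl ⟨v, rfl⟩)⟩, hf v⟩ x := by
      intro x
      have hcA : (↑(↑x : ↥A) : γ) ∈ A := (↑x : ↥A).2
      have hfA : f v ∈ A := hFA (Or.inl ⟨v, rfl⟩)
      obtain ⟨w1, hw1⟩ := walk_induce (G := T) (A := A) (pa (f v) ↑↑x)
        (fun z hz => key2 hfA hcA hz)
      obtain ⟨w2, -⟩ := walk_induce (G := T.induce A) (A := {a : ↥A | v ∈ β ↑a}) w1
        (fun z hz => hSvconv v (hf v) x.2 _ (hw1 z hz))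
      exact ⟨w2.copy (Subtype.ext (Subtype.ext rfl)) (Subtype.ext (Subtype.ext rfl))⟩
    exact fun x y => (hreach x).symm.trans (hreach y)

end TWsep

/-- Let `H` have tree-width at most `t` and let `λ : V(H) → ℝ` satisfy `|λ(v)| ≤ 1` for
every vertex.  If `Σ_v λ(v) ≥ 3t + 3`, then there is a separation `(K, L)` of `H` with
`(1/3)·Σ λ ≤ Σ_{v ∈ K \ L} λ(v) ≤ (2/3)·Σ λ` and `|K ∩ L| ≤ t + 1`. -/
theorem stmt_9 {V : Type} [Fintype V] (t : ℕ) (H : SimpleGraph V)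
    (htw : treewidth H ≤ (t : ℕ∞))
    (lam : V → ℝ) (hlam : ∀ v, |lam v| ≤ 1)
    (hsum : 3 * (t : ℝ) + 3 ≤ ∑ v, lam v) :
    ∃ K L : Set V, K ∪ L = Set.univ ∧
      (∀ u ∈ K \ L, ∀ v ∈ L \ K, ¬ H.Adj u v) ∧
      (1 / 3 : ℝ) * (∑ v, lam v) ≤ ∑ᶠ v ∈ K \ L, lam v ∧
      ∑ᶠ v ∈ K \ L, lam v ≤ (2 / 3 : ℝ) * (∑ v, lam v) ∧
      (K ∩ L).ncard ≤ t + 1 := by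
  classical
  have hd : HasTWDecomp H t := by
    by_contra hne
    have hstep : ∀ w : ℕ, HasTWDecomp H w → t < w := by
      intro w hw
      by_contra hle
      push_neg at hle
      apply hne
      obtain ⟨γ, T, β, hdec, hbags⟩ := hw
      exact ⟨γ, T, β, hdec, fun a => ⟨(hbags a).1, le_trans (hbags a).2 (by omega)⟩⟩
    have hbig : ((t : ℕ∞) + 1) ≤ treewidth H := by
      rw [treewidth]
      refine le_iInf fun w => le_iInf fun hw => ?_
      have := hstep w hw
      exact_mod_cast Nat.succ_le_of_lt this
    have := le_trans hbig htw
    have hlt : (t : ℕ∞) < (t : ℕ∞) + 1 :=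
      (ENat.lt_add_one_iff (by simp)).2 le_rfl
    exact absurd this (not_le.2 hlt)
  obtain ⟨γ, T, β, hdec, hbags⟩ := hd
  obtain ⟨A, hA, hdec'⟩ := TWsep.reduce hdec
  haveI : Fintype ↥A := hA.fintype
  exact TWsep.main_aux t H (T.induce A) (fun a => β ↑a) hdec'
    (fun a => (hbags ↑a).2) lam hlam hsum
end

section
/- Let b ≥ 0 and N ≥ 1 be integers, let P be a staircase in Q_N, and let G be the b-enlargement of P, with left side S₁ and right side S₂. If X ⊆ V(G) is a set that intersects every path in G from S₁ to S₂, and X is minimal with this property (no proper subset of X intersects every such path), then the subgraph of G induced by X is connected. -/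
open SimpleGraph

abbrev V3 : Type := ℤ × ℤ × ℤ

/-- `u` steps to `v`: each coordinate is non-decreasing and increases by at most 1. -/
def stepRel (u v : V3) : Prop :=
  u.1 ≤ v.1 ∧ v.1 ≤ u.1 + 1 ∧
  u.2.1 ≤ v.2.1 ∧ v.2.1 ≤ u.2.1 + 1 ∧
  u.2.2 ≤ v.2.2 ∧ v.2.2 ≤ u.2.2 + 1

/-- membership in the vertex set `{0,…,n-1}³` of the cube `Q_n`. -/
def inCube (n : ℕ) (u : V3) : Prop :=
  0 ≤ u.1 ∧ u.1 ≤ (n : ℤ) - 1 ∧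
  0 ≤ u.2.1 ∧ u.2.1 ≤ (n : ℤ) - 1 ∧
  0 ≤ u.2.2 ∧ u.2.2 ≤ (n : ℤ) - 1

/-- the vertex set of the cube `Q_n`. -/
def cubeBox (n : ℕ) : Set V3 := {u | inCube n u}

/-- The graph `Q_n`: the `n × n × n` grid with all non-decreasing diagonals. -/
def cubeGraph (n : ℕ) : SimpleGraph V3 where
  Adj u v := u ≠ v ∧ inCube n u ∧ inCube n v ∧ (stepRel u v ∨ stepRel v u)
  symm := ⟨by rintro u v ⟨h1, h2, h3, h4⟩; exact ⟨h1.symm, h3, h2, h4.symm⟩⟩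
  loopless := ⟨by rintro u ⟨h, -⟩; exact h rfl⟩

/-- A staircase in `Q_N`: a path whose first coordinate increases by exactly 1 at each
step and whose other two coordinates are non-decreasing. -/
structure Staircase (N : ℕ) where
  k : ℕ
  v : Fin (k + 1) → V3
  mem : ∀ i, inCube N (v i)
  adj : ∀ i : Fin k, (cubeGraph N).Adj (v i.castSucc) (v i.succ)
  step_x : ∀ i : Fin k, (v i.succ).1 = (v i.castSucc).1 + 1
  mono_y : ∀ i : Fin k, (v i.castSucc).2.1 ≤ (v i.succ).2.1
  mono_z : ∀ i : Fin k, (v i.castSucc).2.2 ≤ (v i.succ).2.2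

/-- The first vertex of a staircase. -/
def Staircase.first {N : ℕ} (P : Staircase N) : V3 := P.v 0

/-- The last vertex of a staircase. -/
def Staircase.last {N : ℕ} (P : Staircase N) : V3 := P.v (Fin.last P.k)

/-- The `b`-square around a vertex `u`: `{(x, y+dy, z+dz) : 0 ≤ dy, dz ≤ b}`,
intersected with the vertex set of `Q_N`. -/
def square (N : ℕ) (u : V3) (b : ℕ) : Set V3 :=
  {w | inCube N w ∧ w.1 = u.1 ∧
    u.2.1 ≤ w.2.1 ∧ w.2.1 ≤ u.2.1 + (b : ℤ) ∧
    u.2.2 ≤ w.2.2 ∧ w.2.2 ≤ u.2.2 + (b : ℤ)}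

/-- The vertex set of the `b`-enlargement of a staircase `P`. -/
def enlargeSet (N b : ℕ) (P : Staircase N) : Set V3 :=
  ⋃ i : Fin (P.k + 1), square N (P.v i) b

/-- `Y` intersects every path of the `b`-enlargement of `P` joining its left side
to its right side.  (Paths of the enlargement are exactly the paths of `Q_N` whose
support is contained in the vertex set of the enlargement.) -/
def BlocksSet (N b : ℕ) (P : Staircase N) (Y : Set V3) : Prop :=
  ∀ u w : V3, u ∈ square N P.first b → w ∈ square N P.last b →
    ∀ p : (cubeGraph N).Walk u w, p.IsPath →
      (∀ x ∈ p.support, x ∈ enlargeSet N b P) →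
      ∃ x ∈ Y, x ∈ p.support

namespace Stmt10

/-! ### ZMod 2 helpers -/

lemma z2_cancel : ∀ x y : ZMod 2, x + y = 0 → x = y := by decide
lemma z2_one : ∀ x y : ZMod 2, x + y = 1 → x = y + 1 := by decide
lemma z2_self : ∀ x : ZMod 2, x + x = 0 := by decide
lemma z2_ne : (0 : ZMod 2) ≠ 1 := by decide
lemma z2_eq1 : ∀ x : ZMod 2, (0 : ZMod 2) = x + 1 → x = 1 := by decide

/-! ### cubeGraph adjacency helpers -/

lemma mk_adj {N : ℕ} {u v : V3} (h : u ≠ v) (hu : inCube N u) (hv : inCube N v)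
    (hs : stepRel u v) : (cubeGraph N).Adj u v := ⟨h, hu, hv, Or.inl hs⟩

lemma adj_elim {N : ℕ} {u v : V3} (h : (cubeGraph N).Adj u v) :
    u ≠ v ∧ inCube N u ∧ inCube N v ∧ (stepRel u v ∨ stepRel v u) := h

/-! ### staircase coordinates -/

variable {N : ℕ}

def x0 (P : Staircase N) : ℤ := (P.v 0).1

def idx (P : Staircase N) (n : ℕ) : Fin (P.k + 1) := ⟨min n P.k, by omega⟩

def yy (P : Staircase N) (n : ℕ) : ℤ := (P.v (idx P n)).2.1
def zz (P : Staircase N) (n : ℕ) : ℤ := (P.v (idx P n)).2.2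

def Ay (P : Staircase N) (b n : ℕ) : ℤ := min (yy P n + b) ((N : ℤ) - 1)
def Az (P : Staircase N) (b n : ℕ) : ℤ := min (zz P n + b) ((N : ℤ) - 1)

def par (P : Staircase N) (b : ℕ) (v : V3) : V3 :=
  (v.1 - 1, min v.2.1 (Ay P b (v.1 - 1 - x0 P).toNat),
    min v.2.2 (Az P b (v.1 - 1 - x0 P).toNat))

def SQ (P : Staircase N) (b n : ℕ) : Set V3 := square N (P.v (idx P n)) b

lemma idx_eq (P : Staircase N) {n : ℕ} (h : n ≤ P.k) : idx P n = ⟨n, by omega⟩ := by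
  unfold idx; exact Fin.ext (by simp; omega)

lemma idx_zero (P : Staircase N) : idx P 0 = 0 := by
  unfold idx; exact Fin.ext (by simp)

lemma idx_last (P : Staircase N) : idx P P.k = Fin.last P.k := by
  unfold idx; exact Fin.ext (by simp)

lemma xcoord (P : Staircase N) : ∀ n, n ≤ P.k → (P.v (idx P n)).1 = x0 P + n := by
  intro n
  induction n with
  | zero => intro _; rw [idx_zero]; simp [x0]
  | succ n ih =>
    intro h
    set i : Fin P.k := ⟨n, by omega⟩ with hi
    have hc : idx P n = i.castSucc := by
      rw [idx_eq P (by omega : n ≤ P.k)]; exact Fin.ext (by simp [hi])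
    have hs : idx P (n + 1) = i.succ := by
      rw [idx_eq P h]; exact Fin.ext (by simp [hi])
    have hx := P.step_x i
    rw [hs, hx, ← hc, ih (by omega)]
    push_cast; ring

lemma stair_forward (P : Staircase N) (n : ℕ) (h : n + 1 ≤ P.k) :
    stepRel (P.v (idx P n)) (P.v (idx P (n + 1))) := by
  set i : Fin P.k := ⟨n, by omega⟩ with hi
  have hc : idx P n = i.castSucc := by
    rw [idx_eq P (by omega : n ≤ P.k)]; exact Fin.ext (by simp [hi])
  have hs : idx P (n + 1) = i.succ := by
    rw [idx_eq P h]; exact Fin.ext (by simp [hi])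
  have hx := P.step_x i
  rcases (P.adj i).2.2.2 with h' | h'
  · rw [hc, hs]; exact h'
  · exfalso; have := h'.1; omega

lemma stair_cube (P : Staircase N) (n : ℕ) : inCube N (P.v (idx P n)) := P.mem _

/-! ### squares and the enlargement -/

lemma mem_SQ {P : Staircase N} {b n : ℕ} {w : V3} :
    w ∈ SQ P b n ↔ (inCube N w ∧ w.1 = (P.v (idx P n)).1 ∧
      yy P n ≤ w.2.1 ∧ w.2.1 ≤ yy P n + (b : ℤ) ∧
      zz P n ≤ w.2.2 ∧ w.2.2 ≤ zz P n + (b : ℤ)) := Iff.rfl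

lemma SQ_sub_E {P : Staircase N} {b n : ℕ} {w : V3} (hw : w ∈ SQ P b n) :
    w ∈ enlargeSet N b P := Set.mem_iUnion.2 ⟨idx P n, hw⟩

lemma self_mem_square {b : ℕ} {u : V3} (hu : inCube N u) : u ∈ square N u b := by
  refine ⟨hu, rfl, le_refl _, ?_, le_refl _, ?_⟩ <;> omega

lemma min_fact (a c : ℤ) : min a c ≤ a ∧ min a c ≤ c ∧ (min a c = a ∨ min a c = c) :=
  ⟨min_le_left _ _, min_le_right _ _, min_choice _ _⟩

lemma x0_cube (P : Staircase N) : 0 ≤ x0 P ∧ x0 P ≤ (N:ℤ) - 1 :=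
  ⟨(P.mem 0).1, (P.mem 0).2.1⟩

lemma SQ0_eq (P : Staircase N) (b : ℕ) : SQ P b 0 = square N P.first b := by
  unfold SQ Staircase.first; rw [idx_zero]

lemma SQk_eq (P : Staircase N) (b : ℕ) : SQ P b P.k = square N P.last b := by
  unfold SQ Staircase.last; rw [idx_last]

lemma E_layer {P : Staircase N} {b : ℕ} {w : V3} (hw : w ∈ enlargeSet N b P) :
    ∃ n, n ≤ P.k ∧ w ∈ SQ P b n ∧ w.1 = x0 P + n := by
  rw [enlargeSet, Set.mem_iUnion] at hw
  obtain ⟨i, hi⟩ := hw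
  have hik : (i : ℕ) ≤ P.k := by omega
  have : idx P (i : ℕ) = i := by rw [idx_eq P hik]
  refine ⟨i, hik, ?_, ?_⟩
  · unfold SQ; rw [this]; exact hi
  · have := hi.2.1
    rw [this, ← xcoord P i hik]; congr 1; rw [idx_eq P hik]

lemma E_x0_le {P : Staircase N} {b : ℕ} {w : V3} (hw : w ∈ enlargeSet N b P) :
    x0 P ≤ w.1 := by
  obtain ⟨n, _, _, hx⟩ := E_layer hw; omega

/-! ### geometry of the parent map -/

lemma yy_step (P : Staircase N) (n : ℕ) (h : n + 1 ≤ P.k) :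
    yy P n ≤ yy P (n + 1) ∧ yy P (n + 1) ≤ yy P n + 1 ∧
    zz P n ≤ zz P (n + 1) ∧ zz P (n + 1) ≤ zz P n + 1 := by
  have hs := stair_forward P n h
  exact ⟨hs.2.2.1, hs.2.2.2.1, hs.2.2.2.2.1, hs.2.2.2.2.2⟩

lemma yy_cube (P : Staircase N) (n : ℕ) :
    0 ≤ yy P n ∧ yy P n ≤ (N:ℤ) - 1 ∧ 0 ≤ zz P n ∧ zz P n ≤ (N:ℤ) - 1 := by
  have h := stair_cube P n
  exact ⟨h.2.2.1, h.2.2.2.1, h.2.2.2.2.1, h.2.2.2.2.2⟩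

lemma par_x (P : Staircase N) (b : ℕ) (v : V3) : (par P b v).1 = v.1 - 1 := rfl

lemma par_toNat {P : Staircase N} {b n : ℕ} {w : V3} (hk1 : 1 ≤ n) (hk : n ≤ P.k)
    (hw : w ∈ SQ P b n) : (w.1 - 1 - x0 P).toNat = n - 1 := by
  have hx : w.1 = (P.v (idx P n)).1 := hw.2.1
  have hx2 := xcoord P n hk
  omega

/-- the parent of a vertex of the `n`-th square, `1 ≤ n`, lies in the `n-1`-st square
and steps to it. -/
lemma par_mem {P : Staircase N} {b n : ℕ} {w : V3} (hk1 : 1 ≤ n) (hk : n ≤ P.k)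
    (hw : w ∈ SQ P b n) :
    par P b w ∈ SQ P b (n - 1) ∧ stepRel (par P b w) w := by
  obtain ⟨⟨c1, c2, c3, c4, c5, c6⟩, hx, hy1, hy2, hz1, hz2⟩ := hw
  have hx2 := xcoord P n hk
  have hxn1 := xcoord P (n-1) (by omega)
  have hys : n - 1 + 1 = n := by omega
  have hstep := yy_step P (n-1) (by omega)
  rw [hys] at hstep
  have hcb := yy_cube P (n-1)
  have hcb2 := yy_cube P n
  have htn := par_toNat hk1 hk ⟨⟨c1, c2, c3, c4, c5, c6⟩, hx, hy1, hy2, hz1, hz2⟩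
  have hpy : (par P b w).2.1 = min w.2.1 (Ay P b (n-1)) := by
    simp only [par, htn]
  have hpz : (par P b w).2.2 = min w.2.2 (Az P b (n-1)) := by
    simp only [par, htn]
  have ey1 : yy P (n-1) = (P.v (idx P (n-1))).2.1 := rfl
  have ez1 : zz P (n-1) = (P.v (idx P (n-1))).2.2 := rfl
  have ey2 : yy P n = (P.v (idx P n)).2.1 := rfl
  have ez2 : zz P n = (P.v (idx P n)).2.2 := rfl
  have fAy : Ay P b (n-1) ≤ yy P (n-1) + b ∧ Ay P b (n-1) ≤ (N:ℤ)-1 ∧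
      (Ay P b (n-1) = yy P (n-1) + b ∨ Ay P b (n-1) = (N:ℤ)-1) := min_fact _ _
  have fAz : Az P b (n-1) ≤ zz P (n-1) + b ∧ Az P b (n-1) ≤ (N:ℤ)-1 ∧
      (Az P b (n-1) = zz P (n-1) + b ∨ Az P b (n-1) = (N:ℤ)-1) := min_fact _ _
  have fpy := min_fact w.2.1 (Ay P b (n-1))
  have fpz := min_fact w.2.2 (Az P b (n-1))
  have hx0 := x0_cube P
  refine ⟨⟨?_, ?_, ?_, ?_, ?_, ?_⟩, ?_, ?_, ?_, ?_, ?_, ?_⟩ <;>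
    simp only [inCube, par_x, hpy, hpz] <;> omega

/-- crossing edge: the parent of the upper endpoint relates to the lower endpoint. -/
lemma cross_par {P : Staircase N} {b n : ℕ} {u v : V3} (hk : n + 1 ≤ P.k)
    (hu : u ∈ SQ P b n) (hv : v ∈ SQ P b (n+1)) (hs : stepRel u v) :
    stepRel u (par P b v) := by
  obtain ⟨⟨c1, c2, c3, c4, c5, c6⟩, hx, hy1, hy2, hz1, hz2⟩ := hu
  obtain ⟨⟨d1, d2, d3, d4, d5, d6⟩, ix, iy1, iy2, iz1, iz2⟩ := hv
  have hx2 := xcoord P n (by omega)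
  have hx3 := xcoord P (n+1) hk
  have htn := par_toNat (by omega) hk ⟨⟨d1, d2, d3, d4, d5, d6⟩, ix, iy1, iy2, iz1, iz2⟩
  have h0 : n + 1 - 1 = n := by omega
  rw [h0] at htn
  have hpy : (par P b v).2.1 = min v.2.1 (Ay P b n) := by simp only [par, htn]
  have hpz : (par P b v).2.2 = min v.2.2 (Az P b n) := by simp only [par, htn]
  have ey2 : yy P n = (P.v (idx P n)).2.1 := rfl
  have ez2 : zz P n = (P.v (idx P n)).2.2 := rfl
  have fAy : Ay P b n ≤ yy P n + b ∧ Ay P b n ≤ (N:ℤ)-1 ∧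
      (Ay P b n = yy P n + b ∨ Ay P b n = (N:ℤ)-1) := min_fact _ _
  have fAz : Az P b n ≤ zz P n + b ∧ Az P b n ≤ (N:ℤ)-1 ∧
      (Az P b n = zz P n + b ∨ Az P b n = (N:ℤ)-1) := min_fact _ _
  have fpy := min_fact v.2.1 (Ay P b n)
  have fpz := min_fact v.2.2 (Az P b n)
  have hx0 := x0_cube P
  obtain ⟨s1, s2, s3, s4, s5, s6⟩ := hs
  refine ⟨?_, ?_, ?_, ?_, ?_, ?_⟩ <;>
    simp only [inCube, par_x, hpy, hpz] <;> omega

/-- same-layer edge: the parent of the lower endpoint steps to the upper endpoint. -/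
lemma same_par {P : Staircase N} {b n : ℕ} {u v : V3} (hk1 : 1 ≤ n) (hk : n ≤ P.k)
    (hu : u ∈ SQ P b n) (hv : v ∈ SQ P b n) (hs : stepRel u v) :
    stepRel (par P b u) v := by
  obtain ⟨⟨c1, c2, c3, c4, c5, c6⟩, hx, hy1, hy2, hz1, hz2⟩ := hu
  obtain ⟨⟨d1, d2, d3, d4, d5, d6⟩, ix, iy1, iy2, iz1, iz2⟩ := hv
  have hx2 := xcoord P n hk
  have hxn1 := xcoord P (n-1) (by omega)
  have hys : n - 1 + 1 = n := by omega
  have hstep := yy_step P (n-1) (by omega)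
  rw [hys] at hstep
  have hcb := yy_cube P (n-1)
  have htn := par_toNat hk1 hk ⟨⟨c1, c2, c3, c4, c5, c6⟩, hx, hy1, hy2, hz1, hz2⟩
  have hpy : (par P b u).2.1 = min u.2.1 (Ay P b (n-1)) := by simp only [par, htn]
  have hpz : (par P b u).2.2 = min u.2.2 (Az P b (n-1)) := by simp only [par, htn]
  have ey1 : yy P (n-1) = (P.v (idx P (n-1))).2.1 := rfl
  have ez1 : zz P (n-1) = (P.v (idx P (n-1))).2.2 := rfl
  have ey2 : yy P n = (P.v (idx P n)).2.1 := rfl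
  have ez2 : zz P n = (P.v (idx P n)).2.2 := rfl
  have fAy : Ay P b (n-1) ≤ yy P (n-1) + b ∧ Ay P b (n-1) ≤ (N:ℤ)-1 ∧
      (Ay P b (n-1) = yy P (n-1) + b ∨ Ay P b (n-1) = (N:ℤ)-1) := min_fact _ _
  have fAz : Az P b (n-1) ≤ zz P (n-1) + b ∧ Az P b (n-1) ≤ (N:ℤ)-1 ∧
      (Az P b (n-1) = zz P (n-1) + b ∨ Az P b (n-1) = (N:ℤ)-1) := min_fact _ _
  have fAyn : Ay P b n ≤ yy P n + b ∧ Ay P b n ≤ (N:ℤ)-1 ∧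
      (Ay P b n = yy P n + b ∨ Ay P b n = (N:ℤ)-1) := min_fact _ _
  have fAzn : Az P b n ≤ zz P n + b ∧ Az P b n ≤ (N:ℤ)-1 ∧
      (Az P b n = zz P n + b ∨ Az P b n = (N:ℤ)-1) := min_fact _ _
  have fpy := min_fact u.2.1 (Ay P b (n-1))
  have fpz := min_fact u.2.2 (Az P b (n-1))
  have hx0 := x0_cube P
  obtain ⟨s1, s2, s3, s4, s5, s6⟩ := hs
  refine ⟨?_, ?_, ?_, ?_, ?_, ?_⟩ <;>
    simp only [inCube, par_x, hpy, hpz] <;> omega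

/-! ### the crossing function and the potential -/

open Classical in
noncomputable def indA (A : Set V3) (v : V3) : ZMod 2 := if v ∈ A then 1 else 0

lemma indA_mem {A : Set V3} {v : V3} (h : v ∈ A) : indA A v = 1 := by
  unfold indA; rw [if_pos h]

lemma indA_not {A : Set V3} {v : V3} (h : v ∉ A) : indA A v = 0 := by
  unfold indA; rw [if_neg h]

open Classical in
noncomputable def chi (R A : Set V3) (u v : V3) : ZMod 2 :=
  if (u ∈ R ∧ v ∈ A) ∨ (v ∈ R ∧ u ∈ A) then 1 else 0

lemma chi_symm (R A : Set V3) (u v : V3) : chi R A u v = chi R A v u := by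
  classical
  unfold chi
  exact if_congr or_comm rfl rfl

lemma chi_zero_or_one (R A : Set V3) (u v : V3) : chi R A u v = 0 ∨ chi R A u v = 1 := by
  unfold chi; split <;> simp

lemma chi_eq_one {R A : Set V3} {u v : V3} (h : (u ∈ R ∧ v ∈ A) ∨ (v ∈ R ∧ u ∈ A)) :
    chi R A u v = 1 := by unfold chi; rw [if_pos h]

lemma chi_eq_zero {R A : Set V3} {u v : V3} (h : ¬((u ∈ R ∧ v ∈ A) ∨ (v ∈ R ∧ u ∈ A))) :
    chi R A u v = 0 := by unfold chi; rw [if_neg h]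

lemma chi_cond {R A : Set V3} {u v : V3} (h : chi R A u v = 1) :
    (u ∈ R ∧ v ∈ A) ∨ (v ∈ R ∧ u ∈ A) := by
  by_contra hc; rw [chi_eq_zero hc] at h; exact z2_ne h

open Classical in
noncomputable def gF (P : Staircase N) (b : ℕ) (R A : Set V3) : ℕ → V3 → ZMod 2
  | 0, v => indA A v
  | (n+1), v =>
      if x0 P < v.1 then gF P b R A n (par P b v) + chi R A v (par P b v)
      else indA A v

noncomputable def gg (P : Staircase N) (b : ℕ) (R A : Set V3) (v : V3) : ZMod 2 :=
  gF P b R A (v.1 - x0 P).toNat v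

lemma gg_base {P : Staircase N} {b : ℕ} {R A : Set V3} {v : V3} (h : v.1 ≤ x0 P) :
    gg P b R A v = indA A v := by
  have ht : (v.1 - x0 P).toNat = 0 := by omega
  unfold gg; rw [ht]; rfl

lemma gg_step {P : Staircase N} {b : ℕ} {R A : Set V3} {v : V3} (h : x0 P < v.1) :
    gg P b R A v = gg P b R A (par P b v) + chi R A v (par P b v) := by
  have ht : (v.1 - x0 P).toNat = ((par P b v).1 - x0 P).toNat + 1 := by
    rw [par_x]; omega
  unfold gg; rw [ht]
  show gF P b R A (((par P b v).1 - x0 P).toNat + 1) v = _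
  rw [gF, if_pos h]

/-! ### triangle evenness -/

section Parity

variable {b : ℕ} {P : Staircase N} {R A B : Set V3}

lemma tri_C (hRA : ∀ r ∈ R, r ∉ A)
    (hAB : ∀ a ∈ A, ∀ c ∈ B, ¬ (cubeGraph N).Adj a c)
    (hclosed : ∀ r ∈ R, ∀ w ∈ enlargeSet N b P, (cubeGraph N).Adj r w → w ∈ R ∨ w ∈ A ∨ w ∈ B)
    {u v w : V3} (hwE : w ∈ enlargeSet N b P)
    (huv : (cubeGraph N).Adj u v) (hvw : (cubeGraph N).Adj v w)
    (huw : (cubeGraph N).Adj u w)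
    (h1 : chi R A u v = 1) : chi R A v w + chi R A w u = 1 := by
  rcases chi_cond h1 with ⟨huR, hvA⟩ | ⟨hvR, huA⟩
  · rcases hclosed u huR w hwE huw with hwR | hwA | hwB
    · have e1 : chi R A v w = 1 := chi_eq_one (Or.inr ⟨hwR, hvA⟩)
      have e2 : chi R A w u = 0 := chi_eq_zero (by
        rintro (⟨hwR', huA'⟩ | ⟨huR', hwA'⟩)
        exacts [hRA u huR huA', hRA w hwR hwA'])
      rw [e1, e2]; decide
    · have e1 : chi R A v w = 0 := chi_eq_zero (by
        rintro (⟨hvR', _⟩ | ⟨hwR', _⟩)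
        exacts [hRA v hvR' hvA, hRA w hwR' hwA])
      have e2 : chi R A w u = 1 := chi_eq_one (Or.inr ⟨huR, hwA⟩)
      rw [e1, e2]; decide
    · exact absurd hvw (hAB v hvA w hwB)
  · rcases hclosed v hvR w hwE hvw with hwR | hwA | hwB
    · have e1 : chi R A v w = 0 := chi_eq_zero (by
        rintro (⟨_, hwA'⟩ | ⟨_, hvA'⟩)
        exacts [hRA w hwR hwA', hRA v hvR hvA'])
      have e2 : chi R A w u = 1 := chi_eq_one (Or.inl ⟨hwR, huA⟩)
      rw [e1, e2]; decide
    · have e1 : chi R A v w = 1 := chi_eq_one (Or.inl ⟨hvR, hwA⟩)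
      have e2 : chi R A w u = 0 := chi_eq_zero (by
        rintro (⟨hwR', _⟩ | ⟨huR', _⟩)
        exacts [hRA w hwR' hwA, hRA u huR' huA])
      rw [e1, e2]; decide
    · exact absurd huw (hAB u huA w hwB)

lemma tri_even (hRA : ∀ r ∈ R, r ∉ A)
    (hAB : ∀ a ∈ A, ∀ c ∈ B, ¬ (cubeGraph N).Adj a c)
    (hclosed : ∀ r ∈ R, ∀ w ∈ enlargeSet N b P, (cubeGraph N).Adj r w → w ∈ R ∨ w ∈ A ∨ w ∈ B)
    {u v w : V3} (huE : u ∈ enlargeSet N b P) (hvE : v ∈ enlargeSet N b P)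
    (hwE : w ∈ enlargeSet N b P)
    (huv : (cubeGraph N).Adj u v) (hvw : (cubeGraph N).Adj v w)
    (huw : (cubeGraph N).Adj u w) :
    chi R A u v = chi R A u w + chi R A w v := by
  rcases chi_zero_or_one R A u v with h0 | h1
  · rw [h0]
    rcases chi_zero_or_one R A u w with g0 | g1
    · rcases chi_zero_or_one R A w v with f0 | f1
      · rw [g0, f0]; decide
      · exfalso
        have hcc := tri_C hRA hAB hclosed huE hvw.symm huv.symm huw.symm f1
        rw [chi_symm R A v u, h0, g0] at hcc
        exact absurd hcc (by decide)
    · have hcc := tri_C hRA hAB hclosed hvE huw hvw.symm huv g1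
      rw [chi_symm R A v u, h0, add_zero] at hcc
      rw [g1, hcc]; decide
  · rw [h1]
    have hcc := tri_C hRA hAB hclosed hwE huv hvw huw h1
    rw [chi_symm R A u w, chi_symm R A w v]
    rw [add_comm] at hcc
    exact hcc.symm

lemma base_edge (hRA : ∀ r ∈ R, r ∉ A) (hRB : ∀ r ∈ R, r ∉ B) (hBA : ∀ x ∈ B, x ∉ A)
    (hAB : ∀ a ∈ A, ∀ c ∈ B, ¬ (cubeGraph N).Adj a c)
    (hS1 : ∀ x ∈ SQ P b 0, x ∈ R ∨ x ∈ A ∨ x ∈ B)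
    {u v : V3} (hu : u ∈ SQ P b 0) (hv : v ∈ SQ P b 0)
    (hadj : (cubeGraph N).Adj u v) :
    indA A u + indA A v = chi R A u v := by
  rcases hS1 u hu with huR | huA | huB <;> rcases hS1 v hv with hvR | hvA | hvB
  · rw [indA_not (hRA u huR), indA_not (hRA v hvR), chi_eq_zero (by
      rintro (⟨_, hvA'⟩ | ⟨_, huA'⟩); exacts [hRA v hvR hvA', hRA u huR huA'])]
    decide
  · rw [indA_not (hRA u huR), indA_mem hvA, chi_eq_one (Or.inl ⟨huR, hvA⟩)]; decide
  · rw [indA_not (hRA u huR), indA_not (hBA v hvB), chi_eq_zero (by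
      rintro (⟨_, hvA'⟩ | ⟨hvR', huA'⟩); exacts [hBA v hvB hvA', hRA u huR huA'])]
    decide
  · rw [indA_mem huA, indA_not (hRA v hvR), chi_eq_one (Or.inr ⟨hvR, huA⟩)]; decide
  · rw [indA_mem huA, indA_mem hvA, chi_eq_zero (by
      rintro (⟨huR', _⟩ | ⟨hvR', _⟩); exacts [hRA u huR' huA, hRA v hvR' hvA])]
    decide
  · exact absurd hadj (hAB u huA v hvB)
  · rw [indA_not (hBA u huB), indA_not (hRA v hvR), chi_eq_zero (by
      rintro (⟨huR', _⟩ | ⟨_, huA'⟩); exacts [hRB u huR' huB, hBA u huB huA'])]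
    decide
  · exact absurd hadj.symm (hAB v hvA u huB)
  · rw [indA_not (hBA u huB), indA_not (hBA v hvB), chi_eq_zero (by
      rintro (⟨huR', _⟩ | ⟨hvR', _⟩); exacts [hRB u huR' huB, hRB v hvR' hvB])]
    decide

lemma base_case (hRA : ∀ r ∈ R, r ∉ A) (hRB : ∀ r ∈ R, r ∉ B) (hBA : ∀ x ∈ B, x ∉ A)
    (hAB : ∀ a ∈ A, ∀ c ∈ B, ¬ (cubeGraph N).Adj a c)
    (hS1 : ∀ x ∈ SQ P b 0, x ∈ R ∨ x ∈ A ∨ x ∈ B)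
    {u v : V3} (hu : u ∈ enlargeSet N b P) (hv : v ∈ enlargeSet N b P)
    (hadj : (cubeGraph N).Adj u v) (hux : u.1 = x0 P) (hvx : v.1 = x0 P) :
    gg P b R A u + gg P b R A v = chi R A u v := by
  obtain ⟨m, hm, hum, hux'⟩ := E_layer hu
  obtain ⟨n, hn, hvm, hvx'⟩ := E_layer hv
  have hm0 : m = 0 := by omega
  have hn0 : n = 0 := by omega
  subst hm0; subst hn0
  rw [gg_base (le_of_eq hux), gg_base (le_of_eq hvx)]
  exact base_edge hRA hRB hBA hAB hS1 hum hvm hadj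

lemma cross_case (hRA : ∀ r ∈ R, r ∉ A) (hRB : ∀ r ∈ R, r ∉ B) (hBA : ∀ x ∈ B, x ∉ A)
    (hAB : ∀ a ∈ A, ∀ c ∈ B, ¬ (cubeGraph N).Adj a c)
    (hclosed : ∀ r ∈ R, ∀ w ∈ enlargeSet N b P, (cubeGraph N).Adj r w → w ∈ R ∨ w ∈ A ∨ w ∈ B)
    (M : ℕ)
    (ih : ∀ u v : V3, u ∈ enlargeSet N b P → v ∈ enlargeSet N b P →
      (cubeGraph N).Adj u v → (u.1 + v.1 - 2 * x0 P).toNat ≤ M →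
      gg P b R A u + gg P b R A v = chi R A u v)
    {u v : V3} (hu : u ∈ enlargeSet N b P) (hv : v ∈ enlargeSet N b P)
    (hadj : (cubeGraph N).Adj u v) (hvx : v.1 = u.1 + 1)
    (hM : (u.1 + v.1 - 2 * x0 P).toNat ≤ M + 1) :
    gg P b R A u + gg P b R A v = chi R A u v := by
  obtain ⟨m, hm, hum, hux'⟩ := E_layer hu
  obtain ⟨n, hn, hvm, hvx'⟩ := E_layer hv
  have hn' : n = m + 1 := by omega
  subst hn'
  have hs : stepRel u v := by
    rcases hadj.2.2.2 with h | h
    · exact h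
    · exfalso; have := h.1; omega
  have hx0u : x0 P ≤ u.1 := E_x0_le hu
  have hpar := par_mem (by omega : 1 ≤ m + 1) hn hvm
  have hps : m + 1 - 1 = m := by omega
  rw [hps] at hpar
  have hparx : (par P b v).1 = v.1 - 1 := par_x P b v
  have hcross : stepRel u (par P b v) := cross_par hn hum hvm hs
  have hpvadj : (cubeGraph N).Adj (par P b v) v :=
    mk_adj (by intro he; have := congrArg Prod.fst he; rw [par_x] at this; omega)
      hpar.1.1 hvm.1 hpar.2
  by_cases hpu : par P b v = u
  · have hstep := gg_step (P := P) (b := b) (R := R) (A := A) (show x0 P < v.1 by omega)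
    rw [hpu] at hstep
    rw [hstep]
    calc gg P b R A u + (gg P b R A u + chi R A v u)
        = (gg P b R A u + gg P b R A u) + chi R A v u := by ring
      _ = 0 + chi R A v u := by rw [z2_self]
      _ = chi R A v u := by rw [zero_add]
      _ = chi R A u v := (chi_symm R A u v).symm
  · have hpadj : (cubeGraph N).Adj u (par P b v) :=
      mk_adj (fun he => hpu he.symm) hum.1 hpar.1.1 hcross
    have hIH := ih u (par P b v) hu (SQ_sub_E hpar.1) hpadj (by rw [hparx]; omega)
    have htri := tri_even hRA hAB hclosed hu hv (SQ_sub_E hpar.1) hadj hpvadj.symm hpadj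
    have hstep := gg_step (P := P) (b := b) (R := R) (A := A) (show x0 P < v.1 by omega)
    calc gg P b R A u + gg P b R A v
        = (gg P b R A u + gg P b R A (par P b v)) + chi R A v (par P b v) := by
          rw [hstep]; ring
      _ = chi R A u (par P b v) + chi R A v (par P b v) := by rw [hIH]
      _ = chi R A u v := by
          rw [chi_symm R A v (par P b v)]; exact htri.symm

lemma same_case (hRA : ∀ r ∈ R, r ∉ A) (hRB : ∀ r ∈ R, r ∉ B) (hBA : ∀ x ∈ B, x ∉ A)
    (hAB : ∀ a ∈ A, ∀ c ∈ B, ¬ (cubeGraph N).Adj a c)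
    (hclosed : ∀ r ∈ R, ∀ w ∈ enlargeSet N b P, (cubeGraph N).Adj r w → w ∈ R ∨ w ∈ A ∨ w ∈ B)
    (M : ℕ)
    (ih : ∀ u v : V3, u ∈ enlargeSet N b P → v ∈ enlargeSet N b P →
      (cubeGraph N).Adj u v → (u.1 + v.1 - 2 * x0 P).toNat ≤ M →
      gg P b R A u + gg P b R A v = chi R A u v)
    {u v : V3} (hu : u ∈ enlargeSet N b P) (hv : v ∈ enlargeSet N b P)
    (hadj : (cubeGraph N).Adj u v) (hvx : v.1 = u.1) (hx0 : x0 P < u.1)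
    (hs : stepRel u v)
    (hM : (u.1 + v.1 - 2 * x0 P).toNat ≤ M + 1) :
    gg P b R A u + gg P b R A v = chi R A u v := by
  obtain ⟨m, hm, hum, hux'⟩ := E_layer hu
  obtain ⟨n, hn, hvm, hvx'⟩ := E_layer hv
  have hn' : n = m := by omega
  subst hn'
  have hm1 : 1 ≤ n := by omega
  have hpar := par_mem hm1 hn hum
  have hparx : (par P b u).1 = u.1 - 1 := par_x P b u
  have hupar : (cubeGraph N).Adj (par P b u) u :=
    mk_adj (by intro he; have := congrArg Prod.fst he; rw [par_x] at this; omega)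
      hpar.1.1 hum.1 hpar.2
  have hs2 : stepRel (par P b u) v := same_par hm1 hn hum hvm hs
  have hpadj : (cubeGraph N).Adj (par P b u) v :=
    mk_adj (by intro he; have := congrArg Prod.fst he; rw [par_x] at this; omega)
      hpar.1.1 hvm.1 hs2
  have hIH := ih (par P b u) v (SQ_sub_E hpar.1) hv hpadj (by rw [hparx]; omega)
  have htri := tri_even hRA hAB hclosed hu hv (SQ_sub_E hpar.1) hadj hpadj.symm hupar.symm
  have hstep := gg_step (P := P) (b := b) (R := R) (A := A) hx0
  calc gg P b R A u + gg P b R A v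
      = chi R A u (par P b u) + (gg P b R A (par P b u) + gg P b R A v) := by
        rw [hstep]; ring
    _ = chi R A u (par P b u) + chi R A (par P b u) v := by rw [hIH]
    _ = chi R A u v := htri.symm

lemma edge_lemma (hRA : ∀ r ∈ R, r ∉ A) (hRB : ∀ r ∈ R, r ∉ B) (hBA : ∀ x ∈ B, x ∉ A)
    (hAB : ∀ a ∈ A, ∀ c ∈ B, ¬ (cubeGraph N).Adj a c)
    (hclosed : ∀ r ∈ R, ∀ w ∈ enlargeSet N b P, (cubeGraph N).Adj r w → w ∈ R ∨ w ∈ A ∨ w ∈ B)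
    (hS1 : ∀ x ∈ SQ P b 0, x ∈ R ∨ x ∈ A ∨ x ∈ B) :
    ∀ u v : V3, u ∈ enlargeSet N b P → v ∈ enlargeSet N b P →
      (cubeGraph N).Adj u v → gg P b R A u + gg P b R A v = chi R A u v := by
  suffices H : ∀ M : ℕ, ∀ u v : V3, u ∈ enlargeSet N b P → v ∈ enlargeSet N b P →
      (cubeGraph N).Adj u v → (u.1 + v.1 - 2 * x0 P).toNat ≤ M →
      gg P b R A u + gg P b R A v = chi R A u v by
    exact fun u v h1 h2 h3 => H _ u v h1 h2 h3 le_rfl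
  intro M
  induction M with
  | zero =>
    intro u v hu hv hadj hM
    have h1 := E_x0_le hu
    have h2 := E_x0_le hv
    exact base_case hRA hRB hBA hAB hS1 hu hv hadj (by omega) (by omega)
  | succ M ih =>
    intro u v hu hv hadj hM
    have h1 := E_x0_le hu
    have h2 := E_x0_le hv
    have hxb : u.1 ≤ v.1 + 1 ∧ v.1 ≤ u.1 + 1 := by
      rcases hadj.2.2.2 with h | h
      · obtain ⟨a1, a2, -⟩ := h; exact ⟨by omega, by omega⟩
      · obtain ⟨a1, a2, -⟩ := h; exact ⟨by omega, by omega⟩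
    rcases lt_trichotomy u.1 v.1 with hlt | heq | hgt
    · exact cross_case hRA hRB hBA hAB hclosed M ih hu hv hadj (by omega) hM
    · by_cases hbase : u.1 = x0 P
      · exact base_case hRA hRB hBA hAB hS1 hu hv hadj hbase (by omega)
      · rcases hadj.2.2.2 with hs | hs
        · exact same_case hRA hRB hBA hAB hclosed M ih hu hv hadj heq.symm
            (by omega) hs hM
        · have := same_case hRA hRB hBA hAB hclosed M ih hv hu hadj.symm heq
            (by omega) hs (by omega)
          rw [chi_symm R A u v, add_comm]; exact this
    · have := cross_case hRA hRB hBA hAB hclosed M ih hv hu hadj.symm (by omega)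
        (by omega)
      rw [chi_symm R A u v, add_comm]; exact this

end Parity

/-! ### walks, the reachable set, and the two sides -/

lemma last_sub_E {P : Staircase N} {b : ℕ} {w : V3} (hw : w ∈ square N P.last b) :
    w ∈ enlargeSet N b P := by
  rw [← SQk_eq P b] at hw; exact SQ_sub_E hw

lemma first_sub_E {P : Staircase N} {b : ℕ} {w : V3} (hw : w ∈ square N P.first b) :
    w ∈ enlargeSet N b P := by
  rw [← SQ0_eq P b] at hw; exact SQ_sub_E hw

lemma first_x (P : Staircase N) : P.first.1 = x0 P := rfl

section WalksSec

variable {b : ℕ} {P : Staircase N} {X R A B : Set V3}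

lemma walk_const
    (hedge : ∀ u v : V3, u ∈ enlargeSet N b P → v ∈ enlargeSet N b P →
      (cubeGraph N).Adj u v → gg P b R A u + gg P b R A v = chi R A u v) :
    ∀ {u w : V3} (p : (cubeGraph N).Walk u w),
      (∀ x ∈ p.support, x ∈ enlargeSet N b P) →
      (∀ x ∈ p.support, x ∉ A) → gg P b R A u = gg P b R A w := by
  intro u w p
  induction p with
  | nil => intro _ _; rfl
  | @cons u c w hadj q ih =>
    intro hE hA
    have hcmem : c ∈ (SimpleGraph.Walk.cons hadj q).support := by
      rw [SimpleGraph.Walk.support_cons]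
      exact List.mem_cons_of_mem _ q.start_mem_support
    have h1 := hedge u c (hE u (SimpleGraph.Walk.start_mem_support _)) (hE c hcmem) hadj
    rw [chi_eq_zero (by
      rintro (⟨_, h'⟩ | ⟨_, h'⟩)
      exacts [hA c hcmem h', hA u (SimpleGraph.Walk.start_mem_support _) h'])] at h1
    rw [z2_cancel _ _ h1]
    exact ih (fun x hx => hE x (by rw [SimpleGraph.Walk.support_cons]; exact List.mem_cons_of_mem _ hx))
      (fun x hx => hA x (by rw [SimpleGraph.Walk.support_cons]; exact List.mem_cons_of_mem _ hx))

lemma sq_move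
    (hedge : ∀ u v : V3, u ∈ enlargeSet N b P → v ∈ enlargeSet N b P →
      (cubeGraph N).Adj u v → gg P b R A u + gg P b R A v = chi R A u v)
    (hS2R : ∀ x ∈ square N P.last b, x ∉ R)
    {w w2 : V3} (hw : w ∈ square N P.last b) (hw2 : w2 ∈ square N P.last b)
    (hadj : (cubeGraph N).Adj w w2) : gg P b R A w = gg P b R A w2 := by
  have h1 := hedge w w2 (last_sub_E hw) (last_sub_E hw2) hadj
  rw [chi_eq_zero (by
    rintro (⟨hr, _⟩ | ⟨hr, _⟩)
    exacts [hS2R w hw hr, hS2R w2 hw2 hr])] at h1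
  exact z2_cancel _ _ h1

lemma s2_const
    (hedge : ∀ u v : V3, u ∈ enlargeSet N b P → v ∈ enlargeSet N b P →
      (cubeGraph N).Adj u v → gg P b R A u + gg P b R A v = chi R A u v)
    (hS2R : ∀ x ∈ square N P.last b, x ∉ R) :
    ∀ M : ℕ, ∀ w w' : V3, w ∈ square N P.last b → w' ∈ square N P.last b →
      ((w.2.1 - w'.2.1).natAbs + (w.2.2 - w'.2.2).natAbs ≤ M) →
      gg P b R A w = gg P b R A w' := by
  intro M
  induction M with
  | zero =>
    intro w w' hw hw' hM
    have e1 : w.1 = w'.1 := by rw [hw.2.1, hw'.2.1]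
    have : w = w' := Prod.ext e1 (Prod.ext (by omega) (by omega))
    rw [this]
  | succ M ih =>
    intro w w' hw hw' hM
    obtain ⟨⟨c1, c2, c3, c4, c5, c6⟩, hx, hy1, hy2, hz1, hz2⟩ := hw
    obtain ⟨⟨d1, d2, d3, d4, d5, d6⟩, ix, iy1, iy2, iz1, iz2⟩ := hw'
    have hw : w ∈ square N P.last b := ⟨⟨c1, c2, c3, c4, c5, c6⟩, hx, hy1, hy2, hz1, hz2⟩
    have hw' : w' ∈ square N P.last b := ⟨⟨d1, d2, d3, d4, d5, d6⟩, ix, iy1, iy2, iz1, iz2⟩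
    rcases lt_trichotomy w.2.1 w'.2.1 with hy | hy | hy
    · have hm : ((w.1, w.2.1 + 1, w.2.2) : V3) ∈ square N P.last b := by
        refine ⟨⟨?_, ?_, ?_, ?_, ?_, ?_⟩, ?_, ?_, ?_, ?_, ?_⟩ <;> dsimp only <;> omega
      have hstep : stepRel w ((w.1, w.2.1 + 1, w.2.2) : V3) := by
        refine ⟨?_, ?_, ?_, ?_, ?_, ?_⟩ <;> dsimp only <;> omega
      have hadj : (cubeGraph N).Adj w ((w.1, w.2.1 + 1, w.2.2) : V3) :=
        mk_adj (fun he => by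
          have := congrArg (fun t : V3 => t.2.1) he; dsimp only at this; omega)
          ⟨c1, c2, c3, c4, c5, c6⟩ hm.1 hstep
      rw [sq_move hedge hS2R hw hm hadj]
      exact ih _ w' hm hw' (by dsimp only; omega)
    · rcases lt_trichotomy w.2.2 w'.2.2 with hz | hz | hz
      · have hm : ((w.1, w.2.1, w.2.2 + 1) : V3) ∈ square N P.last b := by
          refine ⟨⟨?_, ?_, ?_, ?_, ?_, ?_⟩, ?_, ?_, ?_, ?_, ?_⟩ <;> dsimp only <;> omega
        have hstep : stepRel w ((w.1, w.2.1, w.2.2 + 1) : V3) := by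
          refine ⟨?_, ?_, ?_, ?_, ?_, ?_⟩ <;> dsimp only <;> omega
        have hadj : (cubeGraph N).Adj w ((w.1, w.2.1, w.2.2 + 1) : V3) :=
          mk_adj (fun he => by
            have := congrArg (fun t : V3 => t.2.2) he; dsimp only at this; omega)
            ⟨c1, c2, c3, c4, c5, c6⟩ hm.1 hstep
        rw [sq_move hedge hS2R hw hm hadj]
        exact ih _ w' hm hw' (by dsimp only; omega)
      · have e1 : w.1 = w'.1 := by rw [hw.2.1, hw'.2.1]
        have : w = w' := Prod.ext e1 (Prod.ext (by omega) (by omega))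
        rw [this]
      · have hm : ((w.1, w.2.1, w.2.2 - 1) : V3) ∈ square N P.last b := by
          refine ⟨⟨?_, ?_, ?_, ?_, ?_, ?_⟩, ?_, ?_, ?_, ?_, ?_⟩ <;> dsimp only <;> omega
        have hstep : stepRel ((w.1, w.2.1, w.2.2 - 1) : V3) w := by
          refine ⟨?_, ?_, ?_, ?_, ?_, ?_⟩ <;> dsimp only <;> omega
        have hadj : (cubeGraph N).Adj w ((w.1, w.2.1, w.2.2 - 1) : V3) :=
          (mk_adj (fun he => by
            have := congrArg (fun t : V3 => t.2.2) he; dsimp only at this; omega)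
            hm.1 ⟨c1, c2, c3, c4, c5, c6⟩ hstep).symm
        rw [sq_move hedge hS2R hw hm hadj]
        exact ih _ w' hm hw' (by dsimp only; omega)
    · have hm : ((w.1, w.2.1 - 1, w.2.2) : V3) ∈ square N P.last b := by
        refine ⟨⟨?_, ?_, ?_, ?_, ?_, ?_⟩, ?_, ?_, ?_, ?_, ?_⟩ <;> dsimp only <;> omega
      have hstep : stepRel ((w.1, w.2.1 - 1, w.2.2) : V3) w := by
        refine ⟨?_, ?_, ?_, ?_, ?_, ?_⟩ <;> dsimp only <;> omega
      have hadj : (cubeGraph N).Adj w ((w.1, w.2.1 - 1, w.2.2) : V3) :=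
        (mk_adj (fun he => by
          have := congrArg (fun t : V3 => t.2.1) he; dsimp only at this; omega)
          hm.1 ⟨c1, c2, c3, c4, c5, c6⟩ hstep).symm
      rw [sq_move hedge hS2R hw hm hadj]
      exact ih _ w' hm hw' (by dsimp only; omega)

end WalksSec

/-! ### the set of vertices reachable from the left side avoiding `X` -/

def RR (N b : ℕ) (P : Staircase N) (X : Set V3) : Set V3 :=
  {v | v ∈ enlargeSet N b P ∧ v ∉ X ∧ ∃ s, s ∈ square N P.first b ∧
    ∃ p : (cubeGraph N).Walk s v, ∀ x ∈ p.support, x ∈ enlargeSet N b P ∧ x ∉ X}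

section RRSec

variable {b : ℕ} {P : Staircase N} {X : Set V3}

lemma RR_extend {v w : V3} (hv : v ∈ RR N b P X) (q : (cubeGraph N).Walk v w)
    (hq : ∀ x ∈ q.support, x ∈ enlargeSet N b P ∧ x ∉ X) : w ∈ RR N b P X := by
  obtain ⟨hvE, hvX, s, hs, p, hp⟩ := hv
  refine ⟨(hq w q.end_mem_support).1, (hq w q.end_mem_support).2, s, hs, p.append q, ?_⟩
  intro x hx
  rw [SimpleGraph.Walk.support_append] at hx
  rcases List.mem_append.1 hx with h | h
  · exact hp x h
  · exact hq x (List.mem_of_mem_tail h)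

lemma RR_S1 {v : V3} (hv : v ∈ square N P.first b) (hvX : v ∉ X) : v ∈ RR N b P X := by
  refine ⟨first_sub_E hv, hvX, v, hv, SimpleGraph.Walk.nil, ?_⟩
  intro x hx
  rw [SimpleGraph.Walk.support_nil, List.mem_singleton] at hx
  subst hx
  exact ⟨first_sub_E hv, hvX⟩

lemma RR_S2 (hblocks : BlocksSet N b P X) {v : V3} (hv2 : v ∈ square N P.last b) :
    v ∉ RR N b P X := by
  rintro ⟨hvE, hvX, s, hs, p, hp⟩
  obtain ⟨x, hxX, hxsup⟩ := hblocks s v hs hv2 p.toPath p.toPath.isPath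
    (fun x hx => (hp x (SimpleGraph.Walk.support_bypass_subset _ hx)).1)
  exact (hp x (SimpleGraph.Walk.support_bypass_subset _ hxsup)).2 hxX

end RRSec

/-! ### the reference path through a single vertex of `A` -/

section RefSec

variable {b : ℕ} {P : Staircase N} {X R A : Set V3}

lemma ref_prefix
    (hedge : ∀ u v : V3, u ∈ enlargeSet N b P → v ∈ enlargeSet N b P →
      (cubeGraph N).Adj u v → gg P b R A u + gg P b R A v = chi R A u v)
    (hRX : ∀ r ∈ R, r ∉ X) (hRA : ∀ r ∈ R, r ∉ A)
    (hext : ∀ v w : V3, ∀ q : (cubeGraph N).Walk v w,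
      (∀ x ∈ q.support, x ∈ enlargeSet N b P ∧ x ∉ X) → v ∈ R → w ∈ R) :
    ∀ (v a : V3) (q : (cubeGraph N).Walk v a), a ∈ A →
      (∀ x ∈ q.support, x ∈ enlargeSet N b P) →
      (∀ x ∈ q.support, x ∈ X → x = a) → v ∈ R →
      gg P b R A v = gg P b R A a + 1 := by
  intro v a q
  induction q with
  | nil => intro haA _ _ hvR; exact absurd haA (hRA _ hvR)
  | @cons v c a hadj q ih =>
    intro haA hE hX hvR
    have hcmem : c ∈ (SimpleGraph.Walk.cons hadj q).support := by
      rw [SimpleGraph.Walk.support_cons]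
      exact List.mem_cons_of_mem _ q.start_mem_support
    have hvE : v ∈ enlargeSet N b P := hE v (SimpleGraph.Walk.start_mem_support _)
    have hcE : c ∈ enlargeSet N b P := hE c hcmem
    by_cases hc : c = a
    · subst hc
      have h1 := hedge v c hvE hcE hadj
      rw [chi_eq_one (Or.inl ⟨hvR, haA⟩)] at h1
      exact z2_one _ _ h1
    · have hcX : c ∉ X := fun h => hc (hX c hcmem h)
      have hcR : c ∈ R := by
        refine hext v c (SimpleGraph.Walk.cons hadj SimpleGraph.Walk.nil) ?_ hvR
        intro x hx
        rw [SimpleGraph.Walk.support_cons, SimpleGraph.Walk.support_nil] at hx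
        rcases List.mem_cons.1 hx with h | h
        · subst h; exact ⟨hvE, hRX _ hvR⟩
        · rw [List.mem_singleton] at h; subst h; exact ⟨hcE, hcX⟩
      have h1 := hedge v c hvE hcE hadj
      rw [chi_eq_zero (by
        rintro (⟨_, h'⟩ | ⟨_, h'⟩)
        exacts [hRA c hcR h', hRA v hvR h'])] at h1
      rw [z2_cancel _ _ h1]
      exact ih haA (fun x hx => hE x (by
          rw [SimpleGraph.Walk.support_cons]; exact List.mem_cons_of_mem _ hx))
        (fun x hx => hX x (by
          rw [SimpleGraph.Walk.support_cons]; exact List.mem_cons_of_mem _ hx))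
        hcR

end RefSec

section RefMain

variable {b : ℕ} {P : Staircase N} {X R A : Set V3}

lemma ref_lemma
    (hedge : ∀ u v : V3, u ∈ enlargeSet N b P → v ∈ enlargeSet N b P →
      (cubeGraph N).Adj u v → gg P b R A u + gg P b R A v = chi R A u v)
    (hRX : ∀ r ∈ R, r ∉ X) (hRA : ∀ r ∈ R, r ∉ A) (hAX : A ⊆ X)
    (hext : ∀ v w : V3, ∀ q : (cubeGraph N).Walk v w,
      (∀ x ∈ q.support, x ∈ enlargeSet N b P ∧ x ∉ X) → v ∈ R → w ∈ R)
    (hRS2 : ∀ x ∈ square N P.last b, x ∉ R)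
    (hS1R : ∀ v ∈ square N P.first b, v ∉ X → v ∈ R)
    {a u w : V3} (haA : a ∈ A)
    (p : (cubeGraph N).Walk u w) (hpath : p.IsPath)
    (hu : u ∈ square N P.first b) (hw : w ∈ square N P.last b)
    (hsupE : ∀ x ∈ p.support, x ∈ enlargeSet N b P)
    (hasup : a ∈ p.support)
    (huniq : ∀ x ∈ p.support, x ∈ X → x = a) :
    gg P b R A w = 1 := by
  classical
  have hsplit : (p.takeUntil a hasup).append (p.dropUntil a hasup) = p :=
    p.take_spec hasup
  have hnodup : p.support.Nodup := hpath.support_nodup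
  have hsupp : p.support =
      (p.takeUntil a hasup).support ++ (p.dropUntil a hasup).support.tail := by
    conv_lhs => rw [← hsplit]
    rw [SimpleGraph.Walk.support_append]
  have hatail : a ∉ (p.dropUntil a hasup).support.tail := by
    intro hx
    have ha1 : a ∈ (p.takeUntil a hasup).support :=
      SimpleGraph.Walk.end_mem_support _
    rw [hsupp] at hnodup
    exact (List.disjoint_of_nodup_append hnodup) ha1 hx
  -- Step 1 : the value at `a` is `1`.
  have hga : gg P b R A a = 1 := by
    by_cases hua : u = a
    · subst hua
      rw [gg_base (le_of_eq (hu.2.1.trans (first_x P)))]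
      exact indA_mem haA
    · have hq1E : ∀ x ∈ (p.takeUntil a hasup).support, x ∈ enlargeSet N b P :=
        fun x hx => hsupE x (SimpleGraph.Walk.support_takeUntil_subset _ _ hx)
      have hq1X : ∀ x ∈ (p.takeUntil a hasup).support, x ∈ X → x = a :=
        fun x hx => huniq x (SimpleGraph.Walk.support_takeUntil_subset _ _ hx)
      have huX : u ∉ X := fun h => hua (huniq u p.start_mem_support h)
      have huR : u ∈ R := hS1R u hu huX
      have h1 := ref_prefix hedge hRX hRA hext u a (p.takeUntil a hasup) haA hq1E hq1X huR
      have huA : u ∉ A := fun h => huX (hAX h)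
      rw [gg_base (le_of_eq (hu.2.1.trans (first_x P))), indA_not huA] at h1
      exact z2_eq1 _ h1
  -- Step 2 : the value at `w` equals the value at `a`.
  have haE : a ∈ enlargeSet N b P := hsupE a hasup
  have hdropsub := SimpleGraph.Walk.support_dropUntil_subset p hasup
  cases hq2c : p.dropUntil a hasup with
  | nil => rw [← hga]
  | @cons _ c _ hadj q' =>
    have hq2sup : (p.dropUntil a hasup).support = a :: q'.support := by
      rw [hq2c, SimpleGraph.Walk.support_cons]
    have hq'free : ∀ x ∈ q'.support, x ∈ enlargeSet N b P ∧ x ∉ X := by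
      intro x hx
      have hxmem : x ∈ (p.dropUntil a hasup).support := by
        rw [hq2sup]; exact List.mem_cons_of_mem _ hx
      refine ⟨hsupE x (hdropsub hxmem), fun hxX => ?_⟩
      have hxa := huniq x (hdropsub hxmem) hxX
      subst hxa
      exact hatail (by rw [hq2sup]; exact hx)
    have hcE : c ∈ enlargeSet N b P := (hq'free c q'.start_mem_support).1
    have hcR : c ∉ R := fun hcR => hRS2 w hw (hext c w q' hq'free hcR)
    have hanR : a ∉ R := fun h => hRA a h haA
    have h1 := hedge a c haE hcE hadj
    rw [chi_eq_zero (by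
      rintro (⟨hr, _⟩ | ⟨hr, _⟩)
      exacts [hanR hr, hcR hr])] at h1
    have hac := z2_cancel _ _ h1
    have hcw := walk_const hedge q' (fun x hx => (hq'free x hx).1)
      (fun x hx h => (hq'free x hx).2 (hAX h))
    rw [← hcw, ← hac]
    exact hga

end RefMain

/-! ### the staircase itself gives a path from the left side to the right side -/

lemma stair_walk (P : Staircase N) (b : ℕ) :
    ∃ p : (cubeGraph N).Walk P.first P.last, ∀ x ∈ p.support, x ∈ enlargeSet N b P := by
  have main : ∀ n, n ≤ P.k → ∃ p : (cubeGraph N).Walk (P.v (idx P 0)) (P.v (idx P n)),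
      ∀ x ∈ p.support, x ∈ enlargeSet N b P := by
    intro n
    induction n with
    | zero =>
      intro _
      refine ⟨SimpleGraph.Walk.nil, ?_⟩
      intro x hx
      rw [SimpleGraph.Walk.support_nil, List.mem_singleton] at hx
      subst hx
      exact SQ_sub_E (self_mem_square (stair_cube P 0))
    | succ n ih =>
      intro h
      obtain ⟨p, hp⟩ := ih (by omega)
      have hadj : (cubeGraph N).Adj (P.v (idx P n)) (P.v (idx P (n + 1))) := by
        refine mk_adj ?_ (stair_cube P n) (stair_cube P (n + 1)) (stair_forward P n h)
        intro he
        have hx1 := xcoord P n (by omega)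
        have hx2 := xcoord P (n + 1) h
        have := congrArg Prod.fst he
        omega
      refine ⟨p.concat hadj, ?_⟩
      intro x hx
      rw [SimpleGraph.Walk.support_concat] at hx
      rcases List.mem_append.1 hx with hmem | hmem
      · exact hp x hmem
      · rw [List.mem_singleton] at hmem
        subst hmem
        exact SQ_sub_E (self_mem_square (stair_cube P (n + 1)))
  obtain ⟨p, hp⟩ := main P.k le_rfl
  have e0' : P.v (idx P 0) = P.first := by rw [idx_zero]; rfl
  have ek' : P.v (idx P P.k) = P.last := by rw [idx_last]; rfl
  refine ⟨p.copy e0' ek', ?_⟩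
  intro x hx
  rw [SimpleGraph.Walk.support_copy] at hx
  exact hp x hx

end Stmt10


/-- If `X` is a minimal set of vertices of the `b`-enlargement `G` of a staircase
intersecting every path of `G` from its left side to its right side, then `G[X]` is
connected. -/
theorem stmt_10 (N b : ℕ) (hN : 1 ≤ N) (P : Staircase N)
    (X : Set V3) (hXsub : X ⊆ enlargeSet N b P)
    (hblocks : BlocksSet N b P X)
    (hmin : ∀ Y : Set V3, Y ⊂ X → ¬ BlocksSet N b P Y) :
    ((cubeGraph N).induce X).Connected := by
  classical
  obtain ⟨sp, hsp⟩ := Stmt10.stair_walk P b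
  have hfirst : P.first ∈ square N P.first b := Stmt10.self_mem_square (P.mem 0)
  have hlast : P.last ∈ square N P.last b := Stmt10.self_mem_square (P.mem _)
  obtain ⟨xa, hxaX, -⟩ := hblocks P.first P.last hfirst hlast sp.toPath sp.toPath.isPath
    (fun x hx => hsp x (SimpleGraph.Walk.support_bypass_subset _ hx))
  rw [SimpleGraph.connected_iff]
  refine ⟨?_, ⟨⟨xa, hxaX⟩⟩⟩
  intro uu vv
  by_contra hnr
  set A : Set V3 := {z | ∃ hz : z ∈ X, ((cubeGraph N).induce X).Reachable uu ⟨z, hz⟩} with hAdef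
  set B : Set V3 := X \ A with hBdef
  set R : Set V3 := Stmt10.RR N b P X with hRdef
  have hAX : A ⊆ X := fun z hz => hz.elim fun h _ => h
  have huuA : (↑uu : V3) ∈ A := ⟨uu.2, by rw [Subtype.coe_eta]⟩
  have hvvB : (↑vv : V3) ∈ B := by
    refine ⟨vv.2, fun hA' => hnr ?_⟩
    obtain ⟨hz, hr⟩ := hA'
    rwa [Subtype.coe_eta] at hr
  have hBA : ∀ x ∈ B, x ∉ A := fun x hx => hx.2
  have hRX : ∀ r ∈ R, r ∉ X := fun r hr => hr.2.1
  have hRE : ∀ r ∈ R, r ∈ enlargeSet N b P := fun r hr => hr.1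
  have hRA : ∀ r ∈ R, r ∉ A := fun r hr ha => hRX r hr (hAX ha)
  have hRB : ∀ r ∈ R, r ∉ B := fun r hr hb => hRX r hr hb.1
  have hABadj : ∀ a ∈ A, ∀ c ∈ B, ¬ (cubeGraph N).Adj a c := by
    rintro a ⟨haX, har⟩ c hc hadj
    apply hc.2
    refine ⟨hc.1, har.trans (SimpleGraph.Adj.reachable ?_)⟩
    simpa using hadj
  have hext : ∀ v w : V3, ∀ q : (cubeGraph N).Walk v w,
      (∀ x ∈ q.support, x ∈ enlargeSet N b P ∧ x ∉ X) → v ∈ R → w ∈ R :=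
    fun v w q hq hv => Stmt10.RR_extend hv q hq
  have hclosed : ∀ r ∈ R, ∀ w ∈ enlargeSet N b P,
      (cubeGraph N).Adj r w → w ∈ R ∨ w ∈ A ∨ w ∈ B := by
    intro r hr w hw hadj
    by_cases hwX : w ∈ X
    · by_cases hwA : w ∈ A
      · exact Or.inr (Or.inl hwA)
      · exact Or.inr (Or.inr ⟨hwX, hwA⟩)
    · refine Or.inl (Stmt10.RR_extend hr (SimpleGraph.Walk.cons hadj SimpleGraph.Walk.nil) ?_)
      intro x hx
      rw [SimpleGraph.Walk.support_cons, SimpleGraph.Walk.support_nil] at hx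
      rcases List.mem_cons.1 hx with h | h
      · subst h; exact ⟨hRE _ hr, hRX _ hr⟩
      · rw [List.mem_singleton] at h; subst h; exact ⟨hw, hwX⟩
  have hS1R : ∀ v ∈ square N P.first b, v ∉ X → v ∈ R :=
    fun v hv hvX => Stmt10.RR_S1 hv hvX
  have hS1 : ∀ x ∈ Stmt10.SQ P b 0, x ∈ R ∨ x ∈ A ∨ x ∈ B := by
    intro x hx
    by_cases hxX : x ∈ X
    · by_cases hxA : x ∈ A
      · exact Or.inr (Or.inl hxA)
      · exact Or.inr (Or.inr ⟨hxX, hxA⟩)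
    · exact Or.inl (hS1R x (by rwa [Stmt10.SQ0_eq] at hx) hxX)
  have hRS2 : ∀ x ∈ square N P.last b, x ∉ R :=
    fun x hx => Stmt10.RR_S2 hblocks hx
  have hedge := Stmt10.edge_lemma hRA hRB hBA hABadj hclosed hS1
  -- use minimality with the vertex `↑uu` removed
  have hYss : X \ {(↑uu : V3)} ⊂ X :=
    (Set.ssubset_iff_of_subset Set.diff_subset).2 ⟨↑uu, uu.2, fun h => h.2 rfl⟩
  have hnb := hmin _ hYss
  unfold BlocksSet at hnb
  push_neg at hnb
  obtain ⟨u, w, hu, hw, p, hpath, hsupE, hnoY⟩ := hnb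
  obtain ⟨xx, hxxX, hxxsup⟩ := hblocks u w hu hw p hpath hsupE
  have hxx_eq : xx = ↑uu := by
    by_contra hne
    exact hnoY xx ⟨hxxX, hne⟩ hxxsup
  have hasup : (↑uu : V3) ∈ p.support := hxx_eq ▸ hxxsup
  have huniq : ∀ x ∈ p.support, x ∈ X → x = ↑uu := by
    intro x hx hxX
    by_contra hne
    exact hnoY x ⟨hxX, hne⟩ hx
  have hgw := Stmt10.ref_lemma hedge hRX hRA hAX hext hRS2 hS1R huuA
    p hpath hu hw hsupE hasup huniq
  have hS2val : ∀ w' ∈ square N P.last b, Stmt10.gg P b R A w' = 1 := by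
    intro w' hw'
    have := Stmt10.s2_const hedge hRS2
      ((w.2.1 - w'.2.1).natAbs + (w.2.2 - w'.2.2).natAbs) w w' hw hw' le_rfl
    rw [← this]
    exact hgw
  have hAblocks : BlocksSet N b P A := by
    intro u' w' hu' hw' p' hp' hsE'
    by_contra hno
    push_neg at hno
    have hAvoid : ∀ x ∈ p'.support, x ∉ A := fun x hx hA' => hno x hA' hx
    have hconst := Stmt10.walk_const hedge p' hsE' hAvoid
    have hgu' : Stmt10.gg P b R A u' = 0 := by
      rw [Stmt10.gg_base (le_of_eq (hu'.2.1.trans (Stmt10.first_x P)))]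
      exact Stmt10.indA_not (hAvoid u' p'.start_mem_support)
    exact Stmt10.z2_ne (by rw [← hgu', hconst, hS2val w' hw'])
  have hAss : A ⊂ X :=
    (Set.ssubset_iff_of_subset hAX).2 ⟨↑vv, vv.2, hvvB.2⟩
  exact hmin A hAss hAblocks
end

section
/- Let n ≥ 1, b ≥ 0, t ≥ 0 and d ≥ n + b be integers, and let N be sufficiently large (N ≥ (8t+5)d suffices). For every vertex z = (j,k) of the (2t+1) × (2t+1) grid, let p_z = (4dj + 4dk, 2dj + dk, dj + 2dk) and let P_z be a staircase contained in the subgrid Q_n(p_z) of Q_N. Then for every edge uz of the (2t+1) × (2t+1) grid there exists a staircase P_{uz} in Q_N joining P_u with P_z; moreover, these staircases can be chosen so that for any two edges uz and u'z' of the grid with {u,z} ∩ {u',z'} = ∅, the b-enlargements of P_{uz} and P_{u'z'} are vertex-disjoint. -/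
open SimpleGraph

/-- The vertex set of the subgrid `Q_n(p)` of `Q_N`. -/
def subBoxSet (N n : ℕ) (p : V3) : Set V3 :=
  {u | inCube N u ∧
    p.1 ≤ u.1 ∧ u.1 ≤ p.1 + (n : ℤ) - 1 ∧
    p.2.1 ≤ u.2.1 ∧ u.2.1 ≤ p.2.1 + (n : ℤ) - 1 ∧
    p.2.2 ≤ u.2.2 ∧ u.2.2 ≤ p.2.2 + (n : ℤ) - 1}

/-- The base point `p_d(j,k) = (4dj + 4dk, 2dj + dk, dj + 2dk)`. -/
def basePt (d j k : ℕ) : V3 :=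
  ((4 * d * j + 4 * d * k : ℤ), (2 * d * j + d * k : ℤ), (d * j + 2 * d * k : ℤ))

/-- Adjacency in the `m × m` grid: `|j₁ − j₂| + |k₁ − k₂| = 1`. -/
def gridAdj {m : ℕ} (u z : Fin m × Fin m) : Prop :=
  ((u.1.val : ℤ) - z.1.val).natAbs + ((u.2.val : ℤ) - z.2.val).natAbs = 1

/-- `P₁` is an initial segment of the staircase `P`. -/
def IsInitSeg {N : ℕ} (P₁ P : Staircase N) : Prop :=
  ∃ h : P₁.k ≤ P.k, ∀ i : Fin (P₁.k + 1),
    P₁.v i = P.v ⟨i.val, by have := i.isLt; omega⟩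

/-- `P₂` is a final segment of the staircase `P`. -/
def IsFinalSeg {N : ℕ} (P₂ P : Staircase N) : Prop :=
  ∃ h : P₂.k ≤ P.k, ∀ i : Fin (P₂.k + 1),
    P₂.v i = P.v ⟨P.k - P₂.k + i.val, by have := i.isLt; omega⟩

/-- The staircase `P` joins `P₁` with `P₂`: one of them is an initial segment of `P` and
the other one is a final segment of `P`. -/
def Joins {N : ℕ} (P P₁ P₂ : Staircase N) : Prop :=
  (IsInitSeg P₁ P ∧ IsFinalSeg P₂ P) ∨ (IsInitSeg P₂ P ∧ IsFinalSeg P₁ P)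

section JoinDev

lemma stair_stepRel {N : ℕ} (P : Staircase N) (i : Fin P.k) :
    stepRel (P.v i.castSucc) (P.v i.succ) := by
  have hx := P.step_x i
  rcases (P.adj i).2.2.2 with h | h
  · exact h
  · unfold stepRel at h ⊢
    omega

/-- the gap between the end of `P₁` and the start of `P₂`. -/
def sjg {N : ℕ} (P₁ P₂ : Staircase N) : ℕ := (P₂.first.1 - P₁.last.1).toNat

/-- the connector point at (integer) offset `m`. -/
def conn (q r : V3) (m : ℤ) : V3 :=
  (q.1 + m, min (q.2.1 + m) r.2.1, max q.2.2 (r.2.2 - (r.1 - q.1) + m))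

lemma conn_1 (q r : V3) (m : ℤ) : (conn q r m).1 = q.1 + m := rfl
lemma conn_21 (q r : V3) (m : ℤ) : (conn q r m).2.1 = min (q.2.1 + m) r.2.1 := rfl
lemma conn_22 (q r : V3) (m : ℤ) :
    (conn q r m).2.2 = max q.2.2 (r.2.2 - (r.1 - q.1) + m) := rfl

/-- vertex function of the joined staircase. -/
def jvf {N : ℕ} (P₁ P₂ : Staircase N) (m : ℕ) : V3 :=
  if m ≤ P₁.k then P₁.v ⟨min m P₁.k, Nat.lt_succ_of_le (min_le_right _ _)⟩
  else if m ≤ P₁.k + sjg P₁ P₂ then conn P₁.last P₂.first ((m - P₁.k : ℕ) : ℤ)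
  else P₂.v ⟨min (m - P₁.k - sjg P₁ P₂) P₂.k, Nat.lt_succ_of_le (min_le_right _ _)⟩

/-- hypotheses under which `P₁` and `P₂` can be joined. -/
structure JH {N : ℕ} (P₁ P₂ : Staircase N) : Prop where
  hx : P₁.last.1 < P₂.first.1
  hy : P₁.last.2.1 ≤ P₂.first.2.1
  hz : P₁.last.2.2 ≤ P₂.first.2.2
  gy : P₂.first.2.1 - P₁.last.2.1 ≤ P₂.first.1 - P₁.last.1
  gz : P₂.first.2.2 - P₁.last.2.2 ≤ P₂.first.1 - P₁.last.1

lemma sjg_cast {N : ℕ} (P₁ P₂ : Staircase N) (H : JH P₁ P₂) :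
    (sjg P₁ P₂ : ℤ) = P₂.first.1 - P₁.last.1 := by
  have := H.hx; unfold sjg; omega

lemma sjg_pos {N : ℕ} (P₁ P₂ : Staircase N) (H : JH P₁ P₂) : 1 ≤ sjg P₁ P₂ := by
  have := H.hx; unfold sjg; omega

lemma jvf_eq1 {N : ℕ} (P₁ P₂ : Staircase N) (m : ℕ) (h : m ≤ P₁.k) (hm : m < P₁.k + 1) :
    jvf P₁ P₂ m = P₁.v ⟨m, hm⟩ := by
  simp only [jvf, if_pos h]
  congr 1
  exact Fin.ext (by simpa using Nat.min_eq_left h)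

lemma jvf_eq2 {N : ℕ} (P₁ P₂ : Staircase N) (H : JH P₁ P₂) (m : ℕ) (h1 : P₁.k ≤ m)
    (h2 : m ≤ P₁.k + sjg P₁ P₂) :
    jvf P₁ P₂ m = conn P₁.last P₂.first ((m - P₁.k : ℕ) : ℤ) := by
  rcases Nat.eq_or_lt_of_le h1 with he | hlt
  · have h0 : m - P₁.k = 0 := by omega
    rw [jvf_eq1 P₁ P₂ m (by omega) (by omega)]
    have hql : P₁.v ⟨m, by omega⟩ = P₁.last := by
      unfold Staircase.last; congr 1; exact Fin.ext (by simp [← he])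
    rw [hql, h0]
    have h1' := H.hy; have h2' := H.hz; have h3' := H.gz
    refine Prod.ext ?_ (Prod.ext ?_ ?_) <;>
      simp only [conn_1, conn_21, conn_22, Nat.cast_zero, add_zero]
    · exact (min_eq_left h1').symm
    · exact (max_eq_left (by omega)).symm
  · simp only [jvf, if_neg (by omega : ¬ m ≤ P₁.k), if_pos h2]

lemma jvf_eq3 {N : ℕ} (P₁ P₂ : Staircase N) (H : JH P₁ P₂) (m : ℕ)
    (h1 : P₁.k + sjg P₁ P₂ ≤ m) (h2 : m ≤ P₁.k + sjg P₁ P₂ + P₂.k)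
    (hm : m - P₁.k - sjg P₁ P₂ < P₂.k + 1) :
    jvf P₁ P₂ m = P₂.v ⟨m - P₁.k - sjg P₁ P₂, hm⟩ := by
  rcases Nat.eq_or_lt_of_le h1 with he | hlt
  · have hg1 := sjg_pos P₁ P₂ H
    rw [jvf_eq2 P₁ P₂ H m (by omega) (by omega)]
    have h0 : m - P₁.k - sjg P₁ P₂ = 0 := by omega
    have hfirst : P₂.v ⟨m - P₁.k - sjg P₁ P₂, hm⟩ = P₂.first := by
      unfold Staircase.first; congr 1; exact Fin.ext (by simp [h0])
    rw [hfirst]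
    have hgc := sjg_cast P₁ P₂ H
    have h1' := H.hy; have h2' := H.hz; have h3' := H.gy; have h4' := H.gz
    have hc : ((m - P₁.k : ℕ) : ℤ) = P₂.first.1 - P₁.last.1 := by omega
    refine Prod.ext ?_ (Prod.ext ?_ ?_) <;>
      simp only [conn_1, conn_21, conn_22]
    · omega
    · rw [min_eq_right (by omega)]
    · rw [max_eq_right (by omega)]; omega
  · have hne1 : ¬ m ≤ P₁.k := by omega
    simp only [jvf, if_neg hne1, if_neg (by omega : ¬ m ≤ P₁.k + sjg P₁ P₂)]
    congr 1
    exact Fin.ext (by simpa using Nat.min_eq_left (by omega))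

lemma jvf_mem {N : ℕ} (P₁ P₂ : Staircase N) (H : JH P₁ P₂) (m : ℕ)
    (hm : m ≤ P₁.k + sjg P₁ P₂ + P₂.k) : inCube N (jvf P₁ P₂ m) := by
  rcases le_or_gt m P₁.k with h | h
  · rw [jvf_eq1 P₁ P₂ m h (by omega)]; exact P₁.mem _
  rcases le_or_gt m (P₁.k + sjg P₁ P₂) with h2 | h2
  · rw [jvf_eq2 P₁ P₂ H m (by omega) h2]
    have hq : inCube N P₁.last := P₁.mem _
    have hr : inCube N P₂.first := P₂.mem _
    have hgc := sjg_cast P₁ P₂ H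
    have h1' := H.hy; have h2' := H.hz; have h3' := H.gy; have h4' := H.gz
    unfold inCube at *
    simp only [conn_1, conn_21, conn_22]
    omega
  · rw [jvf_eq3 P₁ P₂ H m (by omega) hm (by omega)]; exact P₂.mem _

lemma jvf_step {N : ℕ} (P₁ P₂ : Staircase N) (H : JH P₁ P₂) (m : ℕ)
    (hm : m < P₁.k + sjg P₁ P₂ + P₂.k) :
    (jvf P₁ P₂ (m+1)).1 = (jvf P₁ P₂ m).1 + 1 ∧
    (jvf P₁ P₂ m).2.1 ≤ (jvf P₁ P₂ (m+1)).2.1 ∧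
    (jvf P₁ P₂ (m+1)).2.1 ≤ (jvf P₁ P₂ m).2.1 + 1 ∧
    (jvf P₁ P₂ m).2.2 ≤ (jvf P₁ P₂ (m+1)).2.2 ∧
    (jvf P₁ P₂ (m+1)).2.2 ≤ (jvf P₁ P₂ m).2.2 + 1 := by
  have hg1 := sjg_pos P₁ P₂ H
  have hgc := sjg_cast P₁ P₂ H
  rcases lt_or_ge m P₁.k with h | h
  · rw [jvf_eq1 P₁ P₂ m (by omega) (by omega), jvf_eq1 P₁ P₂ (m+1) (by omega) (by omega)]
    have hs := stair_stepRel P₁ ⟨m, h⟩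
    have hx := P₁.step_x ⟨m, h⟩
    unfold stepRel at hs
    simp only [Fin.castSucc_mk, Fin.succ_mk] at hs hx
    exact ⟨hx, hs.2.2.1, hs.2.2.2.1, hs.2.2.2.2.1, hs.2.2.2.2.2⟩
  rcases lt_or_ge m (P₁.k + sjg P₁ P₂) with h2 | h2
  · rw [jvf_eq2 P₁ P₂ H m h (by omega), jvf_eq2 P₁ P₂ H (m+1) (by omega) (by omega)]
    simp only [conn_1, conn_21, conn_22]
    have h1' := H.hy; have h2' := H.hz; have h3' := H.gy; have h4' := H.gz
    omega
  · rw [jvf_eq3 P₁ P₂ H m (by omega) (by omega) (by omega),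
        jvf_eq3 P₁ P₂ H (m+1) (by omega) (by omega) (by omega)]
    have hidx : m + 1 - P₁.k - sjg P₁ P₂ = (m - P₁.k - sjg P₁ P₂) + 1 := by omega
    simp only [hidx]
    have hlt : m - P₁.k - sjg P₁ P₂ < P₂.k := by omega
    have hs := stair_stepRel P₂ ⟨m - P₁.k - sjg P₁ P₂, hlt⟩
    have hx := P₂.step_x ⟨m - P₁.k - sjg P₁ P₂, hlt⟩
    unfold stepRel at hs
    simp only [Fin.castSucc_mk, Fin.succ_mk] at hs hx
    exact ⟨hx, hs.2.2.1, hs.2.2.2.1, hs.2.2.2.2.1, hs.2.2.2.2.2⟩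

/-- The joined staircase. -/
def joinStair {N : ℕ} (P₁ P₂ : Staircase N) (H : JH P₁ P₂) : Staircase N where
  k := P₁.k + sjg P₁ P₂ + P₂.k
  v i := jvf P₁ P₂ i.val
  mem i := jvf_mem P₁ P₂ H i.val (by have := i.isLt; omega)
  adj i := by
    simp only [Fin.coe_castSucc, Fin.val_succ]
    have hs := jvf_step P₁ P₂ H i.val i.isLt
    have m1 := jvf_mem P₁ P₂ H i.val (by have := i.isLt; omega)
    have m2 := jvf_mem P₁ P₂ H (i.val+1) (by have := i.isLt; omega)
    refine ⟨fun he => ?_, m1, m2, Or.inl ?_⟩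
    · have hxx := congrArg Prod.fst he
      omega
    · unfold stepRel
      omega
  step_x i := by
    simp only [Fin.coe_castSucc, Fin.val_succ]
    exact (jvf_step P₁ P₂ H i.val i.isLt).1
  mono_y i := by
    simp only [Fin.coe_castSucc, Fin.val_succ]
    exact (jvf_step P₁ P₂ H i.val i.isLt).2.1
  mono_z i := by
    simp only [Fin.coe_castSucc, Fin.val_succ]
    exact (jvf_step P₁ P₂ H i.val i.isLt).2.2.2.1

lemma joinStair_init {N : ℕ} (P₁ P₂ : Staircase N) (H : JH P₁ P₂) :
    IsInitSeg P₁ (joinStair P₁ P₂ H) := by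
  refine ⟨by show P₁.k ≤ P₁.k + sjg P₁ P₂ + P₂.k; omega, fun i => ?_⟩
  show P₁.v i = jvf P₁ P₂ i.val
  have hi := i.isLt
  rw [jvf_eq1 P₁ P₂ i.val (by omega) hi]

lemma joinStair_final {N : ℕ} (P₁ P₂ : Staircase N) (H : JH P₁ P₂) :
    IsFinalSeg P₂ (joinStair P₁ P₂ H) := by
  refine ⟨by show P₂.k ≤ P₁.k + sjg P₁ P₂ + P₂.k; omega, fun i => ?_⟩
  show P₂.v i = jvf P₁ P₂ (P₁.k + sjg P₁ P₂ + P₂.k - P₂.k + i.val)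
  have hi := i.isLt
  rw [jvf_eq3 P₁ P₂ H _ (by omega) (by omega) (by omega)]
  congr 1
  exact Fin.ext (by simp only [Fin.val_mk]; omega)

/-- The linear region around the joined staircase used for disjointness. -/
def Reg (d n b : ℕ) (p q w : V3) : Prop :=
  p.1 ≤ w.1 ∧ w.1 ≤ q.1 + (n : ℤ) - 1 ∧
  p.2.1 ≤ w.2.1 ∧ w.2.1 ≤ q.2.1 + (n : ℤ) - 1 + b ∧
  p.2.2 ≤ w.2.2 ∧ w.2.2 ≤ q.2.2 + (n : ℤ) - 1 + b ∧
  w.2.1 ≤ p.2.1 + (n : ℤ) - 1 + b + (w.1 - p.1) ∧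
  (p.2.1 + (w.1 - p.1) - ((n : ℤ) - 1) ≤ w.2.1 ∨ q.2.1 ≤ w.2.1) ∧
  (w.2.2 ≤ p.2.2 + (n : ℤ) - 1 + b ∨ w.2.2 ≤ q.2.2 + (n : ℤ) - 1 + b - (q.1 - w.1)) ∧
  q.2.2 - (q.1 - w.1) - ((n : ℤ) - 1) ≤ w.2.2

lemma reg_of_mem {N n b d : ℕ} (P₁ P₂ : Staircase N) (H : JH P₁ P₂) (p q : V3)
    (hb1 : ∀ i, P₁.v i ∈ subBoxSet N n p) (hb2 : ∀ i, P₂.v i ∈ subBoxSet N n q)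
    (hx : q.1 = p.1 + 4 * d) (hy1 : p.2.1 + (d : ℤ) ≤ q.2.1) (hy2 : q.2.1 ≤ p.2.1 + 2 * d)
    (hz1 : p.2.2 + (d : ℤ) ≤ q.2.2) (hz2 : q.2.2 ≤ p.2.2 + 2 * d)
    (hnd : (n : ℤ) ≤ d)
    (w : V3) (hw : w ∈ enlargeSet N b (joinStair P₁ P₂ H)) : Reg d n b p q w := by
  obtain ⟨i, hsq⟩ : ∃ i, w ∈ square N ((joinStair P₁ P₂ H).v i) b := by
    simpa [enlargeSet, Set.mem_iUnion] using hw
  have hsq' : w ∈ square N (jvf P₁ P₂ i.val) b := hsq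
  simp only [square, Set.mem_setOf_eq] at hsq'
  obtain ⟨hwc, hwx, hwy1, hwy2, hwz1, hwz2⟩ := hsq'
  have hm : i.val ≤ P₁.k + sjg P₁ P₂ + P₂.k := by
    have := i.isLt
    have hk : (joinStair P₁ P₂ H).k = P₁.k + sjg P₁ P₂ + P₂.k := rfl
    omega
  unfold Reg
  rcases le_or_gt i.val P₁.k with h | h
  · rw [jvf_eq1 P₁ P₂ i.val h (by omega)] at hwx hwy1 hwy2 hwz1 hwz2
    have hbox := hb1 ⟨i.val, by omega⟩
    simp only [subBoxSet, Set.mem_setOf_eq] at hbox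
    omega
  rcases le_or_gt i.val (P₁.k + sjg P₁ P₂) with h2 | h2
  · rw [jvf_eq2 P₁ P₂ H i.val (by omega) h2] at hwx hwy1 hwy2 hwz1 hwz2
    rw [conn_1] at hwx; rw [conn_21] at hwy1 hwy2; rw [conn_22] at hwz1 hwz2
    have hq : P₁.last ∈ subBoxSet N n p := hb1 _
    have hr : P₂.first ∈ subBoxSet N n q := hb2 _
    simp only [subBoxSet, Set.mem_setOf_eq] at hq hr
    have hgc := sjg_cast P₁ P₂ H
    have h1' := H.hy; have h2' := H.hz; have h3' := H.gy; have h4' := H.gz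
    have hle : i.val - P₁.k ≤ sjg P₁ P₂ := by omega
    omega
  · rw [jvf_eq3 P₁ P₂ H i.val (by omega) hm (by omega)] at hwx hwy1 hwy2 hwz1 hwz2
    have hbox := hb2 ⟨i.val - P₁.k - sjg P₁ P₂, by omega⟩
    simp only [subBoxSet, Set.mem_setOf_eq] at hbox
    omega

end JoinDev
lemma basePt_1 (d j k : ℕ) : (basePt d j k).1 = (4 * d * j + 4 * d * k : ℤ) := rfl
lemma basePt_21 (d j k : ℕ) : (basePt d j k).2.1 = (2 * d * j + d * k : ℤ) := rfl
lemma basePt_22 (d j k : ℕ) : (basePt d j k).2.2 = (d * j + 2 * d * k : ℤ) := rfl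

set_option maxHeartbeats 4000000 in
lemma reg_disj (d n b : ℕ) (hn : 1 ≤ n) (hd : n + b ≤ d)
    (α β e1 e2 f1 f2 : ℤ)
    (he : (e1 = 1 ∧ e2 = 0) ∨ (e1 = 0 ∧ e2 = 1))
    (hf : (f1 = 1 ∧ f2 = 0) ∨ (f1 = 0 ∧ f2 = 1))
    (hne1 : ¬(α = 0 ∧ β = 0)) (hne2 : ¬(α = e1 ∧ β = e2))
    (hne3 : ¬(α + f1 = 0 ∧ β + f2 = 0)) (hne4 : ¬(α + f1 = e1 ∧ β + f2 = e2))
    (p q p' q' w : V3)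
    (hq1 : q.1 = p.1 + 4 * d) (hq2 : q.2.1 = p.2.1 + (e1 + 1) * d)
    (hq3 : q.2.2 = p.2.2 + (e2 + 1) * d)
    (hp1 : p'.1 = p.1 + 4 * ((α + β) * d)) (hp2 : p'.2.1 = p.2.1 + (2 * α + β) * d)
    (hp3 : p'.2.2 = p.2.2 + (α + 2 * β) * d)
    (hq1' : q'.1 = p'.1 + 4 * d) (hq2' : q'.2.1 = p'.2.1 + (f1 + 1) * d)
    (hq3' : q'.2.2 = p'.2.2 + (f2 + 1) * d)
    (h1 : Reg d n b p q w) (h2 : Reg d n b p' q' w) : False := by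
  have hd0 : (0:ℤ) ≤ (d:ℤ) := Int.natCast_nonneg d
  have hE1 : (1:ℤ) * d ≤ (e1+1)*d ∧ (e1+1)*(d:ℤ) ≤ 2*d := by
    rcases he with ⟨rfl, rfl⟩ | ⟨rfl, rfl⟩ <;> constructor <;> omega
  have hE2 : (1:ℤ) * d ≤ (e2+1)*d ∧ (e2+1)*(d:ℤ) ≤ 2*d := by
    rcases he with ⟨rfl, rfl⟩ | ⟨rfl, rfl⟩ <;> constructor <;> omega
  have hF1 : (1:ℤ) * d ≤ (f1+1)*d ∧ (f1+1)*(d:ℤ) ≤ 2*d := by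
    rcases hf with ⟨rfl, rfl⟩ | ⟨rfl, rfl⟩ <;> constructor <;> omega
  have hF2 : (1:ℤ) * d ≤ (f2+1)*d ∧ (f2+1)*(d:ℤ) ≤ 2*d := by
    rcases hf with ⟨rfl, rfl⟩ | ⟨rfl, rfl⟩ <;> constructor <;> omega
  unfold Reg at h1 h2
  have key : (2 ≤ α + β) ∨ (α + β ≤ -2) ∨ (3 ≤ 2*α+β) ∨ (2*α+β ≤ -3) ∨
      (-3 ≤ α ∧ α ≤ 3 ∧ -4 ≤ β ∧ β ≤ 4) := by omega
  rcases key with h|h|h|h|h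
  · have hmul : 2 * (d:ℤ) ≤ (α + β) * d := mul_le_mul_of_nonneg_right h hd0
    omega
  · have hmul : (α + β) * d ≤ -2 * d := mul_le_mul_of_nonneg_right h hd0
    omega
  · have hmul : 3 * (d:ℤ) ≤ (2*α + β) * d := mul_le_mul_of_nonneg_right h hd0
    omega
  · have hmul : (2*α + β) * d ≤ -3 * d := mul_le_mul_of_nonneg_right h hd0
    omega
  obtain ⟨ha1, ha2, hb1, hb2⟩ := h
  rcases he with ⟨rfl, rfl⟩ | ⟨rfl, rfl⟩ <;> rcases hf with ⟨rfl, rfl⟩ | ⟨rfl, rfl⟩ <;>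
    interval_cases α <;> interval_cases β <;> omega

lemma mkJH {N n b d : ℕ} (hn : 1 ≤ n) (hd : n + b ≤ d) (P₁ P₂ : Staircase N) (p q : V3)
    (hb1 : ∀ i, P₁.v i ∈ subBoxSet N n p) (hb2 : ∀ i, P₂.v i ∈ subBoxSet N n q)
    (hx : q.1 = p.1 + 4 * d) (hy1 : p.2.1 + (d : ℤ) ≤ q.2.1) (hy2 : q.2.1 ≤ p.2.1 + 2 * d)
    (hz1 : p.2.2 + (d : ℤ) ≤ q.2.2) (hz2 : q.2.2 ≤ p.2.2 + 2 * d) : JH P₁ P₂ := by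
  have hq : P₁.last ∈ subBoxSet N n p := hb1 _
  have hr : P₂.first ∈ subBoxSet N n q := hb2 _
  simp only [subBoxSet, Set.mem_setOf_eq] at hq hr
  constructor <;> omega

lemma basePt_rel (d : ℕ) (a c a' c' : ℕ)
    (h : (a' = a + 1 ∧ c' = c) ∨ (a' = a ∧ c' = c + 1)) :
    (basePt d a' c').1 = (basePt d a c).1 + 4 * d ∧
    (basePt d a c).2.1 + (d:ℤ) ≤ (basePt d a' c').2.1 ∧
    (basePt d a' c').2.1 ≤ (basePt d a c).2.1 + 2 * d ∧
    (basePt d a c).2.2 + (d:ℤ) ≤ (basePt d a' c').2.2 ∧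
    (basePt d a' c').2.2 ≤ (basePt d a c).2.2 + 2 * d := by
  have hd0 : (0:ℤ) ≤ (d:ℤ) := Int.natCast_nonneg d
  rcases h with ⟨rfl, rfl⟩ | ⟨rfl, rfl⟩ <;>
    simp only [basePt_1, basePt_21, basePt_22] <;> push_cast <;>
    refine ⟨by ring, by nlinarith, by nlinarith, by nlinarith, by nlinarith⟩

lemma coordNe {m : ℕ} {u v : Fin m × Fin m} (h : u ≠ v) :
    ¬(v.1.val = u.1.val ∧ v.2.val = u.2.val) := by
  rintro ⟨hA, hB⟩
  exact h (Prod.ext (Fin.ext hA.symm) (Fin.ext hB.symm))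

lemma join_disjoint {N n b d : ℕ} (hn : 1 ≤ n) (hd : n + b ≤ d)
    (P₁ P₂ P₃ P₄ : Staircase N) (a1 c1 a2 c2 a3 c3 a4 c4 : ℕ)
    (hb1 : ∀ i, P₁.v i ∈ subBoxSet N n (basePt d a1 c1))
    (hb2 : ∀ i, P₂.v i ∈ subBoxSet N n (basePt d a2 c2))
    (hb3 : ∀ i, P₃.v i ∈ subBoxSet N n (basePt d a3 c3))
    (hb4 : ∀ i, P₄.v i ∈ subBoxSet N n (basePt d a4 c4))
    (ho1 : (a2 = a1 + 1 ∧ c2 = c1) ∨ (a2 = a1 ∧ c2 = c1 + 1))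
    (ho2 : (a4 = a3 + 1 ∧ c4 = c3) ∨ (a4 = a3 ∧ c4 = c3 + 1))
    (ne1 : ¬(a3 = a1 ∧ c3 = c1)) (ne2 : ¬(a3 = a2 ∧ c3 = c2))
    (ne3 : ¬(a4 = a1 ∧ c4 = c1)) (ne4 : ¬(a4 = a2 ∧ c4 = c2))
    (H : JH P₁ P₂) (H' : JH P₃ P₄) :
    Disjoint (enlargeSet N b (joinStair P₁ P₂ H)) (enlargeSet N b (joinStair P₃ P₄ H')) := by
  rw [Set.disjoint_left]
  intro w hw hw'
  have hrel1 := basePt_rel d a1 c1 a2 c2 ho1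
  have hrel2 := basePt_rel d a3 c3 a4 c4 ho2
  have r1 := reg_of_mem P₁ P₂ H _ _ hb1 hb2 hrel1.1 hrel1.2.1 hrel1.2.2.1
    hrel1.2.2.2.1 hrel1.2.2.2.2 (by omega) w hw
  have r2 := reg_of_mem P₃ P₄ H' _ _ hb3 hb4 hrel2.1 hrel2.2.1 hrel2.2.2.1
    hrel2.2.2.2.1 hrel2.2.2.2.2 (by omega) w hw'
  rcases ho1 with ⟨h1a, h1c⟩ | ⟨h1a, h1c⟩ <;> rcases ho2 with ⟨h2a, h2c⟩ | ⟨h2a, h2c⟩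
  · have hA : ((a2:ℕ):ℤ) = (a1:ℤ) + 1 := by omega
    have hC : ((c2:ℕ):ℤ) = (c1:ℤ)  := by omega
    have hA' : ((a4:ℕ):ℤ) = (a3:ℤ) + 1 := by omega
    have hC' : ((c4:ℕ):ℤ) = (c3:ℤ)  := by omega
    exact reg_disj d n b hn hd ((a3:ℤ) - a1) ((c3:ℤ) - c1) 1 0 1 0
      (Or.inl ⟨rfl, rfl⟩) (Or.inl ⟨rfl, rfl⟩)
      (by omega) (by omega) (by omega) (by omega) _ _ _ _ w
      (by simp only [basePt_1]; push_cast; linear_combination 4*(d:ℤ)*hA + 4*(d:ℤ)*hC)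
      (by simp only [basePt_21]; push_cast; linear_combination 2*(d:ℤ)*hA + (d:ℤ)*hC)
      (by simp only [basePt_22]; push_cast; linear_combination (d:ℤ)*hA + 2*(d:ℤ)*hC)
      (by simp only [basePt_1]; push_cast; ring)
      (by simp only [basePt_21]; push_cast; ring)
      (by simp only [basePt_22]; push_cast; ring)
      (by simp only [basePt_1]; push_cast; linear_combination 4*(d:ℤ)*hA' + 4*(d:ℤ)*hC')
      (by simp only [basePt_21]; push_cast; linear_combination 2*(d:ℤ)*hA' + (d:ℤ)*hC')
      (by simp only [basePt_22]; push_cast; linear_combination (d:ℤ)*hA' + 2*(d:ℤ)*hC')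
      r1 r2
  · have hA : ((a2:ℕ):ℤ) = (a1:ℤ) + 1 := by omega
    have hC : ((c2:ℕ):ℤ) = (c1:ℤ)  := by omega
    have hA' : ((a4:ℕ):ℤ) = (a3:ℤ)  := by omega
    have hC' : ((c4:ℕ):ℤ) = (c3:ℤ) + 1 := by omega
    exact reg_disj d n b hn hd ((a3:ℤ) - a1) ((c3:ℤ) - c1) 1 0 0 1
      (Or.inl ⟨rfl, rfl⟩) (Or.inr ⟨rfl, rfl⟩)
      (by omega) (by omega) (by omega) (by omega) _ _ _ _ w
      (by simp only [basePt_1]; push_cast; linear_combination 4*(d:ℤ)*hA + 4*(d:ℤ)*hC)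
      (by simp only [basePt_21]; push_cast; linear_combination 2*(d:ℤ)*hA + (d:ℤ)*hC)
      (by simp only [basePt_22]; push_cast; linear_combination (d:ℤ)*hA + 2*(d:ℤ)*hC)
      (by simp only [basePt_1]; push_cast; ring)
      (by simp only [basePt_21]; push_cast; ring)
      (by simp only [basePt_22]; push_cast; ring)
      (by simp only [basePt_1]; push_cast; linear_combination 4*(d:ℤ)*hA' + 4*(d:ℤ)*hC')
      (by simp only [basePt_21]; push_cast; linear_combination 2*(d:ℤ)*hA' + (d:ℤ)*hC')
      (by simp only [basePt_22]; push_cast; linear_combination (d:ℤ)*hA' + 2*(d:ℤ)*hC')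
      r1 r2
  · have hA : ((a2:ℕ):ℤ) = (a1:ℤ)  := by omega
    have hC : ((c2:ℕ):ℤ) = (c1:ℤ) + 1 := by omega
    have hA' : ((a4:ℕ):ℤ) = (a3:ℤ) + 1 := by omega
    have hC' : ((c4:ℕ):ℤ) = (c3:ℤ)  := by omega
    exact reg_disj d n b hn hd ((a3:ℤ) - a1) ((c3:ℤ) - c1) 0 1 1 0
      (Or.inr ⟨rfl, rfl⟩) (Or.inl ⟨rfl, rfl⟩)
      (by omega) (by omega) (by omega) (by omega) _ _ _ _ w
      (by simp only [basePt_1]; push_cast; linear_combination 4*(d:ℤ)*hA + 4*(d:ℤ)*hC)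
      (by simp only [basePt_21]; push_cast; linear_combination 2*(d:ℤ)*hA + (d:ℤ)*hC)
      (by simp only [basePt_22]; push_cast; linear_combination (d:ℤ)*hA + 2*(d:ℤ)*hC)
      (by simp only [basePt_1]; push_cast; ring)
      (by simp only [basePt_21]; push_cast; ring)
      (by simp only [basePt_22]; push_cast; ring)
      (by simp only [basePt_1]; push_cast; linear_combination 4*(d:ℤ)*hA' + 4*(d:ℤ)*hC')
      (by simp only [basePt_21]; push_cast; linear_combination 2*(d:ℤ)*hA' + (d:ℤ)*hC')
      (by simp only [basePt_22]; push_cast; linear_combination (d:ℤ)*hA' + 2*(d:ℤ)*hC')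
      r1 r2
  · have hA : ((a2:ℕ):ℤ) = (a1:ℤ)  := by omega
    have hC : ((c2:ℕ):ℤ) = (c1:ℤ) + 1 := by omega
    have hA' : ((a4:ℕ):ℤ) = (a3:ℤ)  := by omega
    have hC' : ((c4:ℕ):ℤ) = (c3:ℤ) + 1 := by omega
    exact reg_disj d n b hn hd ((a3:ℤ) - a1) ((c3:ℤ) - c1) 0 1 0 1
      (Or.inr ⟨rfl, rfl⟩) (Or.inr ⟨rfl, rfl⟩)
      (by omega) (by omega) (by omega) (by omega) _ _ _ _ w
      (by simp only [basePt_1]; push_cast; linear_combination 4*(d:ℤ)*hA + 4*(d:ℤ)*hC)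
      (by simp only [basePt_21]; push_cast; linear_combination 2*(d:ℤ)*hA + (d:ℤ)*hC)
      (by simp only [basePt_22]; push_cast; linear_combination (d:ℤ)*hA + 2*(d:ℤ)*hC)
      (by simp only [basePt_1]; push_cast; ring)
      (by simp only [basePt_21]; push_cast; ring)
      (by simp only [basePt_22]; push_cast; ring)
      (by simp only [basePt_1]; push_cast; linear_combination 4*(d:ℤ)*hA' + 4*(d:ℤ)*hC')
      (by simp only [basePt_21]; push_cast; linear_combination 2*(d:ℤ)*hA' + (d:ℤ)*hC')
      (by simp only [basePt_22]; push_cast; linear_combination (d:ℤ)*hA' + 2*(d:ℤ)*hC')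
      r1 r2

lemma gridAdj_symm {m : ℕ} {u z : Fin m × Fin m} (h : gridAdj u z) : gridAdj z u := by
  unfold gridAdj at h ⊢; omega

/-- Given staircases `P_z ⊆ Q_n(p_z)` for the vertices `z` of the `(2t+1) × (2t+1)` grid,
each edge `uz` of the grid can be realized by a staircase `P_{uz}` joining `P_u` with `P_z`,
such that the `b`-enlargements corresponding to edges with no common endpoint are
vertex-disjoint. -/
theorem stmt_12 (n b t d N : ℕ) (hn : 1 ≤ n) (hd : n + b ≤ d)
    (hN : (8 * t + 5) * d ≤ N)
    (P : Fin (2 * t + 1) × Fin (2 * t + 1) → Staircase N)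
    (hP : ∀ z : Fin (2 * t + 1) × Fin (2 * t + 1), ∀ i,
      (P z).v i ∈ subBoxSet N n (basePt d z.1.val z.2.val)) :
    ∃ PE : Fin (2 * t + 1) × Fin (2 * t + 1) → Fin (2 * t + 1) × Fin (2 * t + 1) →
        Staircase N,
      (∀ u z, gridAdj u z → Joins (PE u z) (P u) (P z)) ∧
      (∀ u z u' z', gridAdj u z → gridAdj u' z' →
        u ≠ u' → u ≠ z' → z ≠ u' → z ≠ z' →
        Disjoint (enlargeSet N b (PE u z)) (enlargeSet N b (PE u' z'))) := by
  classical
  have hOA : ∀ u z : Fin (2*t+1) × Fin (2*t+1), gridAdj u z →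
      u.1.val + u.2.val < z.1.val + z.2.val →
      ((z.1.val = u.1.val + 1 ∧ z.2.val = u.2.val) ∨
        (z.1.val = u.1.val ∧ z.2.val = u.2.val + 1)) := by
    intro u z ha hlv; unfold gridAdj at ha; omega
  have hJH : ∀ u z : Fin (2*t+1) × Fin (2*t+1),
      ((z.1.val = u.1.val + 1 ∧ z.2.val = u.2.val) ∨
        (z.1.val = u.1.val ∧ z.2.val = u.2.val + 1)) →
      JH (P u) (P z) := by
    intro u z h
    have hrel := basePt_rel d u.1.val u.2.val z.1.val z.2.val h
    exact mkJH hn hd _ _ _ _ (hP u) (hP z) hrel.1 hrel.2.1 hrel.2.2.1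
      hrel.2.2.2.1 hrel.2.2.2.2
  refine ⟨fun u z =>
    if h : gridAdj u z ∧ u.1.val + u.2.val < z.1.val + z.2.val then
      joinStair (P u) (P z) (hJH u z (hOA u z h.1 h.2))
    else if h' : gridAdj u z ∧ z.1.val + z.2.val < u.1.val + u.2.val then
      joinStair (P z) (P u) (hJH z u (hOA z u (gridAdj_symm h'.1) h'.2))
    else P u, ?_, ?_⟩
  · intro u z ha
    have htr : u.1.val + u.2.val < z.1.val + z.2.val ∨
        z.1.val + z.2.val < u.1.val + u.2.val := by
      unfold gridAdj at ha; omega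
    dsimp only
    rcases htr with hlt | hgt
    · rw [dif_pos ⟨ha, hlt⟩]
      exact Or.inl ⟨joinStair_init _ _ _, joinStair_final _ _ _⟩
    · rw [dif_neg (by rintro ⟨-, h⟩; omega), dif_pos ⟨ha, hgt⟩]
      exact Or.inr ⟨joinStair_init _ _ _, joinStair_final _ _ _⟩
  · intro u z u' z' ha ha' h1 h2 h3 h4
    have htr : u.1.val + u.2.val < z.1.val + z.2.val ∨
        z.1.val + z.2.val < u.1.val + u.2.val := by
      unfold gridAdj at ha; omega
    have htr' : u'.1.val + u'.2.val < z'.1.val + z'.2.val ∨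
        z'.1.val + z'.2.val < u'.1.val + u'.2.val := by
      unfold gridAdj at ha'; omega
    dsimp only
    rcases htr with hlt | hgt <;> rcases htr' with hlt' | hgt'
    · rw [dif_pos ⟨ha, hlt⟩, dif_pos ⟨ha', hlt'⟩]
      exact join_disjoint hn hd _ _ _ _ _ _ _ _ _ _ _ _ (hP u) (hP z) (hP u') (hP z')
        (hOA u z ha hlt) (hOA u' z' ha' hlt')
        (coordNe h1) (coordNe h3) (coordNe h2) (coordNe h4) _ _
    · rw [dif_pos ⟨ha, hlt⟩, dif_neg (by rintro ⟨-, h⟩; omega), dif_pos ⟨ha', hgt'⟩]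
      exact join_disjoint hn hd _ _ _ _ _ _ _ _ _ _ _ _ (hP u) (hP z) (hP z') (hP u')
        (hOA u z ha hlt) (hOA z' u' (gridAdj_symm ha') hgt')
        (coordNe h2) (coordNe h4) (coordNe h1) (coordNe h3) _ _
    · rw [dif_neg (by rintro ⟨-, h⟩; omega), dif_pos ⟨ha, hgt⟩, dif_pos ⟨ha', hlt'⟩]
      exact join_disjoint hn hd _ _ _ _ _ _ _ _ _ _ _ _ (hP z) (hP u) (hP u') (hP z')
        (hOA z u (gridAdj_symm ha) hgt) (hOA u' z' ha' hlt')
        (coordNe h3) (coordNe h1) (coordNe h4) (coordNe h2) _ _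
    · rw [dif_neg (by rintro ⟨-, h⟩; omega), dif_pos ⟨ha, hgt⟩,
          dif_neg (by rintro ⟨-, h⟩; omega), dif_pos ⟨ha', hgt'⟩]
      exact join_disjoint hn hd _ _ _ _ _ _ _ _ _ _ _ _ (hP z) (hP u) (hP z') (hP u')
        (hOA z u (gridAdj_symm ha) hgt) (hOA z' u' (gridAdj_symm ha') hgt')
        (coordNe h4) (coordNe h2) (coordNe h3) (coordNe h1) _ _
end
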